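/- arXiv:2008.09531 — 7 statements merged into one kernel-verified Lean document; each statement's English description precedes it below -/
import Mathlib

section
/- Let K be a field of characteristic 0, let m ≥ 2 be even, and let l, n ≥ 1. For every v ∈ ⋀^m K^n one has v^{∧l} = l!·Σ_A hpf^{(m,l)}_A(v)·e_A, where A runs over the (m·l)-element subsets of {1,…,n}. Consequently, v^{∧l} = 0 if and only if hpf^{(m,l)}_A(v) = 0 for every (m·l)-element subset A ⊆ {1,…,n}; that is, the hyper-Pfaffian variety HPf^{(m,l)}(K^n) cut out by all degree-l width-m hyper-Pfaffian forms coincides with the set of vectors of ⋀^m K^n of nilpotency degree l. -/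
open scoped BigOperators

/-- Number of inversions of a list over a linear order. -/
def inversions {α : Type*} [LinearOrder α] (L : List α) : ℕ :=
  (Finset.univ.filter fun p : Fin L.length × Fin L.length =>
    p.1 < p.2 ∧ L.get p.2 < L.get p.1).card

/-- Sign of a list of distinct elements: the sign of the permutation taking the increasing
enumeration of its set of entries to the list itself. -/
def listSign {α : Type*} [LinearOrder α] (L : List α) : ℤ :=
  (-1) ^ inversions L

/-- `sgn(I₁,…,I_l)`: the sign of the permutation of `A = I₁ ∪ ⋯ ∪ I_l` taking the increasing
enumeration of `A` to the concatenation of the increasing enumerations of the blocks. -/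
def blocksSign {α : Type*} [LinearOrder α] (Is : List (Finset α)) : ℤ :=
  listSign (Is.flatMap fun I => I.sort (· ≤ ·))

/-- The (unordered) hyper-Pfaffian form `hpf^{(m,l)}_A` evaluated at the coordinate vector
`c`: the sum over all unordered partitions of `A` into `m`-element blocks — each partition
represented by the unique ordered tuple whose blocks have strictly increasing minima — of
`sgn(I₁,…,I_l)·c(I₁)⋯c(I_l)`. -/
noncomputable def hpfEval (K : Type*) [Field K] {α : Type*} [LinearOrder α]
    (m l : ℕ) (A : Finset α) (c : Finset α → K) : K :=
  ∑ f ∈ Fintype.piFinset (fun _ : Fin l => Finset.powersetCard m A),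
    if (∀ i j : Fin l, i ≠ j → Disjoint (f i) (f j)) ∧ Finset.univ.sup f = A ∧
        (∀ i j : Fin l, i < j → (f i).min < (f j).min) then
      (blocksSign (List.ofFn f) : K) * ∏ t, c (f t)
    else 0

/-- The basis wedge `e_I = e_{i₁}∧⋯∧e_{i_k}` (for `I = {i₁<⋯<i_k}`) in the exterior algebra
of `K^n = Fin n → K`. -/
noncomputable def eWedge (K : Type*) [Field K] (n : ℕ) (I : Finset (Fin n)) :
    ExteriorAlgebra K (Fin n → K) :=
  ((I.sort (· ≤ ·)).map fun i => ExteriorAlgebra.ι K (Pi.single i 1)).prod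

section Comb
variable {α : Type*} [LinearOrder α]

lemma card_filter_get (p : α → Prop) [DecidablePred p] :
    ∀ L : List α,
      (Finset.univ.filter fun i : Fin L.length => p (L.get i)).card = (L.filter p).length := by
  intro L
  induction L with
  | nil => simp
  | cons a L ih =>
    rw [Finset.card_filter, List.filter_cons]
    simp only [List.length_cons]
    rw [Fin.sum_univ_succ]
    simp only [show ∀ j : Fin L.length, (a :: L).get j.succ = L.get j from fun _ => rfl]
    rw [← Finset.card_filter, ih]
    by_cases h : p a <;> simp [h, add_comm]

lemma inversions_cons (a : α) (L : List α) :
    inversions (a :: L) = (L.filter (· < a)).length + inversions L := by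
  rw [inversions, Finset.card_filter, Fintype.sum_prod_type]
  simp only [List.length_cons]
  rw [Fin.sum_univ_succ]
  congr 1
  · rw [Fin.sum_univ_succ]
    simp only [show ∀ j : Fin L.length, (a :: L).get j.succ = L.get j from fun _ => rfl,
      List.get_cons_zero, lt_self_iff_false, false_and, if_false,
      Fin.succ_pos, true_and, zero_add]
    rw [← card_filter_get (· < a) L, Finset.card_filter]
  · rw [inversions, Finset.card_filter, Fintype.sum_prod_type]
    refine Finset.sum_congr rfl fun i _ => ?_
    rw [Fin.sum_univ_succ]
    simp [Fin.succ_lt_succ_iff,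
      show ∀ j : Fin L.length, (a :: L).get j.succ = L.get j from fun _ => rfl]

lemma listSign_cons (a : α) (L : List α) :
    listSign (a :: L) = (-1) ^ (L.filter (· < a)).length * listSign L := by
  rw [listSign, listSign, inversions_cons, pow_add]

lemma inversions_eq_zero_of_sorted {L : List α} (h : L.Pairwise (· ≤ ·)) :
    inversions L = 0 := by
  rw [inversions, Finset.card_eq_zero, Finset.filter_eq_empty_iff]
  rintro p - ⟨h1, h2⟩
  exact absurd (h.rel_get_of_lt h1) (not_le.mpr h2)

lemma listSign_of_sorted {L : List α} (h : L.Pairwise (· ≤ ·)) : listSign L = 1 := by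
  rw [listSign, inversions_eq_zero_of_sorted h, pow_zero]

end Comb

section Ext
variable (K : Type*) [Field K] (n : ℕ)

noncomputable def ιe (i : Fin n) : ExteriorAlgebra K (Fin n → K) :=
  ExteriorAlgebra.ι K (Pi.single i 1)

noncomputable def FL (L : List (Fin n)) : ExteriorAlgebra K (Fin n → K) :=
  (L.map (ιe K n)).prod

variable {n}

lemma FL_nil : FL K n [] = 1 := rfl

lemma FL_cons (a : Fin n) (L : List (Fin n)) : FL K n (a :: L) = ιe K n a * FL K n L := by
  simp [FL]

lemma FL_append (L₁ L₂ : List (Fin n)) : FL K n (L₁ ++ L₂) = FL K n L₁ * FL K n L₂ := by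
  simp [FL]

lemma eWedge_eq_FL (I : Finset (Fin n)) : eWedge K n I = FL K n (I.sort (· ≤ ·)) := rfl

lemma ιe_anticomm (i j : Fin n) : ιe K n i * ιe K n j = -(ιe K n j * ιe K n i) :=
  eq_neg_of_add_eq_zero_left (ExteriorAlgebra.ι_add_mul_swap _ _)

lemma ιe_sq (i : Fin n) : ιe K n i * ιe K n i = 0 := ExteriorAlgebra.ι_sq_zero _

lemma FL_perm {L₁ L₂ : List (Fin n)} (h : L₁.Perm L₂) :
    FL K n L₁ = FL K n L₂ ∨ FL K n L₁ = -FL K n L₂ := by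
  induction h with
  | nil => exact Or.inl rfl
  | cons x h ih =>
    rw [FL_cons, FL_cons]
    rcases ih with h' | h'
    · exact Or.inl (by rw [h'])
    · exact Or.inr (by rw [h', mul_neg])
  | swap x y L =>
    refine Or.inr ?_
    rw [FL_cons, FL_cons, FL_cons, FL_cons, ← mul_assoc, ← mul_assoc,
      ιe_anticomm, neg_mul]
  | trans h₁ h₂ ih₁ ih₂ =>
    rcases ih₁ with h' | h' <;> rcases ih₂ with h'' | h''
    · exact Or.inl (h'.trans h'')
    · exact Or.inr (h'.trans h'')
    · exact Or.inr (by rw [h', h''])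
    · exact Or.inl (by rw [h', h'', neg_neg])

lemma FL_eq_zero_of_not_nodup {L : List (Fin n)} (h : ¬ L.Nodup) : FL K n L = 0 := by
  obtain ⟨a, ha⟩ := List.exists_duplicate_iff_not_nodup.mpr h
  have h1 : a ∈ L := ha.mem
  have h2 : a ∈ L.erase a := by
    have := List.duplicate_iff_two_le_count.mp ha
    have hc : 1 ≤ (L.erase a).count a := by
      have := List.count_erase_self (a := a) (l := L)
      omega
    exact List.count_pos_iff.mp hc
  have hperm : L.Perm (a :: a :: ((L.erase a).erase a)) :=
    (List.perm_cons_erase h1).trans ((List.perm_cons_erase h2).cons a)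
  have hz : FL K n (a :: a :: ((L.erase a).erase a)) = 0 := by
    rw [FL_cons, FL_cons, ← mul_assoc, ιe_sq, zero_mul]
  rcases FL_perm K hperm with h' | h' <;> simp [h', hz]

lemma ιe_mul_eWedge (a : Fin n) (T : Finset (Fin n)) (ha : a ∉ T) :
    ιe K n a * eWedge K n T
      = ((-1 : K) ^ (T.filter (· < a)).card) • eWedge K n (insert a T) := by
  induction T using Finset.strongInduction with
  | _ T ih =>
    rcases T.eq_empty_or_nonempty with rfl | hT
    · simp [eWedge, FL, ιe]
    · set b := T.min' hT with hbdef
      have hb : b ∈ T := T.min'_mem hT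
      have hmin : ∀ x ∈ T, b ≤ x := fun x hx => T.min'_le x hx
      have hab : a ≠ b := fun hh => ha (hh ▸ hb)
      rcases lt_or_gt_of_ne hab with h1 | h1
      · -- a < b, so a below everything
        have hsort : (insert a T).sort (· ≤ ·) = a :: T.sort (· ≤ ·) :=
          Finset.sort_insert _ (fun x hx => (h1.trans_le (hmin x hx)).le) ha
        have hfil : T.filter (· < a) = ∅ := by
          rw [Finset.filter_eq_empty_iff]
          exact fun x hx => not_lt.mpr ((h1.trans_le (hmin x hx)).le)
        rw [hfil]
        simp only [Finset.card_empty, pow_zero, one_smul]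
        rw [eWedge_eq_FL, eWedge_eq_FL, hsort, FL_cons]
      · -- b < a
        set T' := T.erase b with hT'def
        have hbT' : b ∉ T' := Finset.notMem_erase b T
        have hins : insert b T' = T := Finset.insert_erase hb
        have hss : T' ⊂ T := Finset.erase_ssubset hb
        have haT' : a ∉ T' := fun hx => ha (Finset.erase_subset _ _ hx)
        have hminT' : ∀ x ∈ T', b ≤ x := fun x hx => hmin x (Finset.erase_subset _ _ hx)
        have hsortT : T.sort (· ≤ ·) = b :: T'.sort (· ≤ ·) := by
          rw [← hins]; exact Finset.sort_insert _ hminT' hbT'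
        have hsort2 : (insert a T).sort (· ≤ ·) = b :: (insert a T').sort (· ≤ ·) := by
          have : insert a T = insert b (insert a T') := by
            rw [← hins, Finset.insert_comm]
          rw [this]
          refine Finset.sort_insert _ ?_ ?_
          · intro x hx
            rcases Finset.mem_insert.mp hx with rfl | hx
            · exact h1.le
            · exact hminT' x hx
          · simp only [Finset.mem_insert]
            push_neg
            exact ⟨hab.symm, hbT'⟩
        have hcard : (T.filter (· < a)).card = (T'.filter (· < a)).card + 1 := by
          rw [← hins, Finset.filter_insert, if_pos h1]
          rw [Finset.card_insert_of_notMem (fun hx => hbT' (Finset.mem_of_mem_filter b hx))]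
        calc ιe K n a * eWedge K n T
            = ιe K n a * (ιe K n b * eWedge K n T') := by
              rw [eWedge_eq_FL, hsortT, FL_cons, eWedge_eq_FL]
          _ = -(ιe K n b * (ιe K n a * eWedge K n T')) := by
              rw [← mul_assoc, ← mul_assoc, ιe_anticomm, neg_mul]
          _ = -(ιe K n b * (((-1 : K) ^ (T'.filter (· < a)).card) • eWedge K n (insert a T'))) := by
              rw [ih T' hss haT']
          _ = ((-1 : K) ^ ((T'.filter (· < a)).card + 1)) •
                (ιe K n b * eWedge K n (insert a T')) := by
              rw [mul_smul_comm, pow_succ, ← neg_smul]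
              ring_nf
          _ = ((-1 : K) ^ (T.filter (· < a)).card) • eWedge K n (insert a T) := by
              rw [hcard, eWedge_eq_FL K (insert a T), hsort2, FL_cons, ← eWedge_eq_FL]

lemma FL_eq_listSign_smul {L : List (Fin n)} (h : L.Nodup) :
    FL K n L = (listSign L : K) • eWedge K n L.toFinset := by
  induction L with
  | nil =>
    have : inversions ([] : List (Fin n)) = 0 := by
      simp [inversions, Finset.univ_eq_empty]
    simp [FL_nil, listSign, this, eWedge, FL]
  | cons a L ih =>
    have ha : a ∉ L := (List.nodup_cons.mp h).1
    have hL : L.Nodup := (List.nodup_cons.mp h).2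
    have haT : a ∉ L.toFinset := by simpa using ha
    have hcount : (L.toFinset.filter (· < a)).card = (L.filter (· < a)).length := by
      have hsetfil : (L.filter (· < a)).toFinset = L.toFinset.filter (· < a) := by
        ext x; simp [List.mem_filter]
      rw [← hsetfil]
      exact List.toFinset_card_of_nodup (hL.filter _)
    rw [FL_cons, ih hL, mul_smul_comm, ιe_mul_eWedge K a _ haT, listSign_cons,
      List.toFinset_cons, smul_smul, hcount]
    push_cast
    ring_nf

lemma ιe_mul_FL (i : Fin n) (Y : List (Fin n)) :
    ιe K n i * FL K n Y = ((-1 : K) ^ Y.length) • (FL K n Y * ιe K n i) := by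
  induction Y with
  | nil => simp [FL_nil]
  | cons b Y ih =>
    rw [FL_cons, ← mul_assoc, ιe_anticomm, neg_mul, mul_assoc, ih, List.length_cons,
      mul_smul_comm, ← neg_smul, pow_succ, mul_assoc]
    ring_nf

lemma FL_mul_FL (X Y : List (Fin n)) :
    FL K n X * FL K n Y = ((-1 : K) ^ (X.length * Y.length)) • (FL K n Y * FL K n X) := by
  induction X with
  | nil => simp [FL_nil]
  | cons a X ih =>
    rw [FL_cons, mul_assoc, ih, mul_smul_comm, ← mul_assoc, ιe_mul_FL, smul_mul_assoc,
      smul_smul, mul_assoc, ← FL_cons, List.length_cons, ← pow_add, add_one_mul]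

end Ext

section Fock
variable (K : Type*) [Field K] [CharZero K] (n : ℕ)

noncomputable def creaF (i : Fin n) (B : Finset (Fin n)) : Finset (Fin n) →₀ K :=
  if i ∈ B then 0
  else ((-1 : K) ^ (B.filter (· < i)).card) • Finsupp.single (insert i B) 1

noncomputable def crea (i : Fin n) : (Finset (Fin n) →₀ K) →ₗ[K] (Finset (Fin n) →₀ K) :=
  Finsupp.lsum K fun B => LinearMap.toSpanSingleton K _ (creaF K n i B)

variable {n}

lemma crea_single (i : Fin n) (B : Finset (Fin n)) (t : K) :
    crea K n i (Finsupp.single B t) = t • creaF K n i B := by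
  simp [crea]

lemma filter_insert_card {i j : Fin n} (B : Finset (Fin n)) (hj : j ∉ B) :
    ((insert j B).filter (· < i)).card
      = (B.filter (· < i)).card + if j < i then 1 else 0 := by
  rw [Finset.filter_insert]
  split_ifs with h
  · rw [Finset.card_insert_of_notMem (fun hx => hj (Finset.mem_of_mem_filter j hx))]
  · rw [add_zero]

lemma crea_creaF_add (i j : Fin n) (B : Finset (Fin n)) :
    crea K n i (creaF K n j B) + crea K n j (creaF K n i B) = 0 := by
  by_cases hj : j ∈ B <;> by_cases hi : i ∈ B
  · simp [creaF, hi, hj]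
  · simp [creaF, crea_single, map_smul, Finset.mem_insert, hi, hj]
  · simp [creaF, crea_single, map_smul, Finset.mem_insert, hi, hj]
  · rcases eq_or_ne i j with rfl | hij
    · rw [show creaF K n i B
          = ((-1:K) ^ (B.filter (· < i)).card) • Finsupp.single (insert i B) 1 from if_neg hi,
        map_smul, crea_single, one_smul,
        show creaF K n i (insert i B) = 0 from if_pos (Finset.mem_insert_self i B)]
      simp
    · have hiI : i ∉ insert j B := by simp [Finset.mem_insert, hij, hi]
      have hjI : j ∉ insert i B := by simp [Finset.mem_insert, hij.symm, hj]
      have e1 : crea K n i (creaF K n j B)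
          = ((-1:K) ^ ((B.filter (· < j)).card + (B.filter (· < i)).card
              + if j < i then 1 else 0))
            • Finsupp.single (insert i (insert j B)) 1 := by
        rw [show creaF K n j B
            = ((-1:K) ^ (B.filter (· < j)).card) • Finsupp.single (insert j B) 1 from if_neg hj,
          map_smul, crea_single, one_smul,
          show creaF K n i (insert j B)
            = ((-1:K) ^ ((insert j B).filter (· < i)).card)
              • Finsupp.single (insert i (insert j B)) 1 from if_neg hiI,
          filter_insert_card B hj, smul_smul, ← pow_add, ← add_assoc]
      have e2 : crea K n j (creaF K n i B)
          = ((-1:K) ^ ((B.filter (· < i)).card + (B.filter (· < j)).card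
              + if i < j then 1 else 0))
            • Finsupp.single (insert j (insert i B)) 1 := by
        rw [show creaF K n i B
            = ((-1:K) ^ (B.filter (· < i)).card) • Finsupp.single (insert i B) 1 from if_neg hi,
          map_smul, crea_single, one_smul,
          show creaF K n j (insert i B)
            = ((-1:K) ^ ((insert i B).filter (· < j)).card)
              • Finsupp.single (insert j (insert i B)) 1 from if_neg hjI,
          filter_insert_card B hi, smul_smul, ← pow_add, ← add_assoc]
      rw [e1, e2, show insert j (insert i B) = insert i (insert j B) from Finset.insert_comm j i B,
        ← add_smul]
      convert zero_smul K _
      have key1 : ∀ a b : ℕ, ((-1:K)^(a+b) + (-1:K)^(b+a+1)) = 0 := by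
        intro a b; rw [pow_succ, pow_add, pow_add]; ring
      have key2 : ∀ a b : ℕ, ((-1:K)^(a+b+1) + (-1:K)^(b+a)) = 0 := by
        intro a b; rw [pow_succ, pow_add, pow_add]; ring
      rcases hij.lt_or_gt with h | h
      · rw [if_neg (not_lt.mpr h.le), if_pos h, add_zero]
        exact key1 _ _
      · rw [if_pos h, if_neg (not_lt.mpr h.le), add_zero]
        exact key2 _ _

lemma crea_anticomm (i j : Fin n) (x : Finset (Fin n) →₀ K) :
    crea K n i (crea K n j x) + crea K n j (crea K n i x) = 0 := by
  induction x using Finsupp.induction_linear with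
  | zero => simp
  | add f g hf hg =>
    rw [map_add, map_add, map_add, map_add, add_add_add_comm, hf, hg, add_zero]
  | single B t =>
    rw [crea_single, map_smul, crea_single, map_smul, ← smul_add, crea_creaF_add, smul_zero]

noncomputable def fockGen : (Fin n → K) →ₗ[K] Module.End K (Finset (Fin n) →₀ K) where
  toFun x := ∑ i, x i • crea K n i
  map_add' x y := by simp [add_smul, Finset.sum_add_distrib]
  map_smul' a x := by simp [Finset.smul_sum, smul_smul]

lemma fockGen_apply (x : Fin n → K) : fockGen K x = ∑ i, x i • crea K n i := rfl

lemma fockGen_sq (x : Fin n → K) : fockGen K x * fockGen K x = 0 := by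
  have hS : fockGen K x * fockGen K x
      = ∑ i : Fin n, ∑ j : Fin n, (x i * x j) • (crea K n i * crea K n j) := by
    rw [fockGen_apply, Finset.sum_mul_sum]
    refine Finset.sum_congr rfl fun i _ => Finset.sum_congr rfl fun j _ => ?_
    rw [smul_mul_smul_comm]
  have h2 : (2 : K) • (fockGen K x * fockGen K x) = 0 := by
    rw [two_smul, hS]
    nth_rewrite 2 [Finset.sum_comm]
    rw [← Finset.sum_add_distrib]
    refine Finset.sum_eq_zero fun i _ => ?_
    rw [← Finset.sum_add_distrib]
    refine Finset.sum_eq_zero fun j _ => ?_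
    rw [mul_comm (x j) (x i), ← smul_add]
    convert smul_zero _
    refine LinearMap.ext fun v => ?_
    simpa [Module.End.mul_apply] using crea_anticomm K i j v
  have h2' : (2 : K) ≠ 0 := two_ne_zero
  exact (smul_eq_zero.mp h2).resolve_left h2'

noncomputable def fockRep : ExteriorAlgebra K (Fin n → K) →ₐ[K] Module.End K (Finset (Fin n) →₀ K) :=
  ExteriorAlgebra.lift K ⟨fockGen K, fockGen_sq K⟩

lemma fockRep_ι (x : Fin n → K) : fockRep K (ExteriorAlgebra.ι K x) = fockGen K x := by
  rw [fockRep, ExteriorAlgebra.lift_ι_apply]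

lemma fockGen_single (i : Fin n) : fockGen K (Pi.single i (1:K)) = crea K n i := by
  rw [fockGen_apply]
  have : ∀ j : Fin n, (Pi.single i 1 : Fin n → K) j • crea K n j
      = if j = i then crea K n j else 0 := by
    intro j
    rw [Pi.single_apply, ite_smul, one_smul, zero_smul]
  simp only [this]
  rw [Finset.sum_ite_eq' Finset.univ i (fun j => crea K n j), if_pos (Finset.mem_univ i)]

lemma fockRep_FL (L : List (Fin n)) (hs : L.Pairwise (· ≤ ·)) (hn : L.Nodup) :
    fockRep K (FL K n L) (Finsupp.single ∅ 1) = Finsupp.single L.toFinset 1 := by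
  induction L with
  | nil =>
    rw [FL_nil, map_one]
    simp
  | cons a L ih =>
    have ha : a ∉ L := (List.nodup_cons.mp hn).1
    have hL : L.Nodup := (List.nodup_cons.mp hn).2
    have hle : ∀ b ∈ L, a ≤ b := fun b hb => (List.pairwise_cons.mp hs).1 b hb
    rw [FL_cons, map_mul, Module.End.mul_apply, ih (List.pairwise_cons.mp hs).2 hL, ιe,
      fockRep_ι, fockGen_single, crea_single, one_smul, creaF,
      if_neg (by simpa using ha)]
    have hfil : L.toFinset.filter (· < a) = ∅ := by
      rw [Finset.filter_eq_empty_iff]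
      intro x hx
      exact not_lt.mpr (hle x (List.mem_toFinset.mp hx))
    rw [hfil]
    simp

lemma fockRep_eWedge (A : Finset (Fin n)) :
    fockRep K (eWedge K n A) (Finsupp.single ∅ 1) = Finsupp.single A 1 := by
  rw [eWedge_eq_FL]
  rw [fockRep_FL K _ (Finset.pairwise_sort _ _) (Finset.sort_nodup _ _), Finset.sort_toFinset]

lemma eWedge_linearIndependent {S : Finset (Finset (Fin n))} {t : Finset (Fin n) → K}
    (h : ∑ A ∈ S, t A • eWedge K n A = 0) : ∀ A ∈ S, t A = 0 := by
  intro A₀ hA₀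
  have h1 : ∑ A ∈ S, t A • Finsupp.single (M := K) A 1 = 0 := by
    have := congrArg (fun z => fockRep K z (Finsupp.single ∅ 1)) h
    simpa [map_sum, LinearMap.sum_apply, fockRep_eWedge] using this
  have h2 := congrArg (fun z : Finset (Fin n) →₀ K => z A₀) h1
  simp only [Finsupp.coe_finset_sum, Finset.sum_apply, Finsupp.smul_apply,
    Finsupp.single_apply, Finsupp.coe_zero, Pi.zero_apply] at h2
  rw [Finset.sum_eq_single_of_mem A₀ hA₀ (fun A _ hA => by simp [hA])] at h2
  simpa using h2

end Fock

section Main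
variable (K : Type*) [Field K] [CharZero K] {n : ℕ}

def flatS {n l : ℕ} (f : Fin l → Finset (Fin n)) : List (Fin n) :=
  (List.ofFn f).flatMap fun I => I.sort (· ≤ ·)

lemma flatS_cons {l : ℕ} (I : Finset (Fin n)) (f : Fin l → Finset (Fin n)) :
    flatS (Fin.cons I f) = I.sort (· ≤ ·) ++ flatS f := by
  rw [flatS, List.ofFn_succ]
  simp only [Fin.cons_zero, Fin.cons_succ, List.flatMap_cons]
  rfl

lemma pow_expand (m l : ℕ) (c : Finset (Fin n) → K) :
    (∑ I ∈ Finset.powersetCard m (Finset.univ : Finset (Fin n)), c I • eWedge K n I) ^ l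
      = ∑ f ∈ Fintype.piFinset
            (fun _ : Fin l => Finset.powersetCard m (Finset.univ : Finset (Fin n))),
          (∏ t, c (f t)) • FL K n (flatS f) := by
  induction l with
  | zero =>
    rw [pow_zero, show Fintype.piFinset
        (fun _ : Fin 0 => Finset.powersetCard m (Finset.univ : Finset (Fin n)))
        = Finset.univ from by ext f; simp [Fintype.mem_piFinset],
      Finset.univ_unique, Finset.sum_singleton]
    simp [flatS, FL]
  | succ l ih =>
    rw [pow_succ', ih, Finset.mul_sum]
    simp_rw [Finset.sum_mul]
    rw [← Finset.sum_product']
    refine Finset.sum_nbij' (fun p => Fin.cons p.2 p.1) (fun g => (Fin.tail g, g 0))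
      ?_ ?_ ?_ ?_ ?_
    · rintro ⟨f, I⟩ hp
      rw [Finset.mem_product] at hp
      rw [Fintype.mem_piFinset]
      intro i
      refine Fin.cases ?_ ?_ i
      · simpa using hp.2
      · intro k
        simpa using Fintype.mem_piFinset.mp hp.1 k
    · intro g hg
      rw [Finset.mem_product]
      exact ⟨Fintype.mem_piFinset.mpr fun i => Fintype.mem_piFinset.mp hg i.succ,
        Fintype.mem_piFinset.mp hg 0⟩
    · rintro ⟨f, I⟩ _
      simp [Fin.tail_cons, Fin.cons_zero]
    · intro g _
      simp [Fin.cons_self_tail]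
    · rintro ⟨f, I⟩ _
      dsimp only
      rw [Fin.prod_univ_succ, Fin.cons_zero, flatS_cons, FL_append, smul_mul_smul_comm,
        eWedge_eq_FL]
      simp only [Fin.cons_succ]

variable {l m : ℕ}

lemma disjoint_of_flat_nodup {f : Fin l → Finset (Fin n)} (h : (flatS f).Nodup) :
    ∀ i j, i ≠ j → Disjoint (f i) (f j) := by
  rw [flatS, List.nodup_flatMap] at h
  have hp := h.2
  rw [List.pairwise_ofFn] at hp
  have key : ∀ i j, i < j → Disjoint (f i) (f j) := by
    intro i j hij
    have hd := hp hij
    rw [Finset.disjoint_left]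
    intro x hx hx2
    exact hd (a := x) (by simpa using hx) (by simpa using hx2)
  intro i j hij
  rcases hij.lt_or_gt with h' | h'
  · exact key i j h'
  · exact (key j i h').symm

lemma flat_nodup {f : Fin l → Finset (Fin n)}
    (h : ∀ i j, i ≠ j → Disjoint (f i) (f j)) : (flatS f).Nodup := by
  rw [flatS, List.nodup_flatMap]
  refine ⟨fun L _ => Finset.sort_nodup _ _, ?_⟩
  rw [List.pairwise_ofFn]
  intro i j hij
  intro x hx hx2
  exact Finset.disjoint_left.mp (h i j hij.ne) (by simpa using hx) (by simpa using hx2)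

lemma flat_toFinset {f : Fin l → Finset (Fin n)} :
    (flatS f).toFinset = Finset.univ.sup f := by
  ext x
  simp only [flatS, List.mem_toFinset, List.mem_flatMap, List.mem_ofFn, Finset.mem_sup]
  constructor
  · rintro ⟨L, ⟨i, rfl⟩, hx⟩
    exact ⟨i, Finset.mem_univ i, by simpa using hx⟩
  · rintro ⟨i, -, hx⟩
    exact ⟨f i, ⟨i, rfl⟩, by simpa using hx⟩

end Main

section Main2
variable (K : Type*) [Field K] [CharZero K] {n l m : ℕ}

/-- blocks of even size commute -/
lemma FL_flat_comp_perm (hm : Even m) (f : Fin l → Finset (Fin n))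
    (hf : ∀ i, (f i).card = m) (σ : Equiv.Perm (Fin l)) :
    FL K n (flatS (f ∘ σ)) = FL K n (flatS f) := by
  have hFLflat : ∀ g : Fin l → Finset (Fin n),
      FL K n (flatS g) = (List.ofFn fun i => FL K n ((g i).sort (· ≤ ·))).prod := by
    intro g
    rw [flatS]
    have : ∀ L : List (Finset (Fin n)),
        FL K n (L.flatMap fun I => I.sort (· ≤ ·))
          = (L.map fun I => FL K n (I.sort (· ≤ ·))).prod := by
      intro L
      induction L with
      | nil => simp [FL]
      | cons I L ih => rw [List.flatMap_cons, FL_append, List.map_cons, List.prod_cons, ih]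
    rw [this, List.map_ofFn]
    rfl
  rw [hFLflat, hFLflat]
  set w : Fin l → ExteriorAlgebra K (Fin n → K) := fun i => FL K n ((f i).sort (· ≤ ·)) with hw
  have hcomm : ∀ i j : Fin l, Commute (w i) (w j) := by
    intro i j
    have := FL_mul_FL K ((f i).sort (· ≤ ·)) ((f j).sort (· ≤ ·))
    rw [Finset.length_sort, Finset.length_sort, hf i, hf j,
      (hm.mul_right m).neg_one_pow, one_smul] at this
    exact this
  have hperm : (List.ofFn (w ∘ ⇑σ)).Perm (List.ofFn w) := σ.ofFn_comp_perm w
  show (List.ofFn (w ∘ ⇑σ)).prod = (List.ofFn w).prod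
  exact hperm.prod_eq' ((List.pairwise_ofFn).mpr fun i j _ => hcomm (σ i) (σ j))

lemma min_injective (hm1 : 1 ≤ m) {f : Fin l → Finset (Fin n)}
    (hcard : ∀ i, (f i).card = m) (hdisj : ∀ i j, i ≠ j → Disjoint (f i) (f j)) :
    Function.Injective (fun i => (f i).min) := by
  intro i j hij
  by_contra hne
  have hne' : i ≠ j := hne
  have hne2 : ∀ k : Fin l, ∃ a : Fin n, (f k).min = a ∧ a ∈ f k := by
    intro k
    have hk : (f k).Nonempty := Finset.card_pos.mp (by rw [hcard k]; omega)
    obtain ⟨a, ha⟩ := Finset.min_of_nonempty hk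
    exact ⟨a, ha, Finset.mem_of_min ha⟩
  obtain ⟨a, ha, hamem⟩ := hne2 i
  obtain ⟨b, hb, hbmem⟩ := hne2 j
  have : (a : WithTop (Fin n)) = b := by
    rw [← ha, ← hb]; exact hij
  have hab : a = b := by exact_mod_cast this
  subst hab
  exact Finset.disjoint_left.mp (hdisj i j hne') hamem hbmem

/-- a strictly monotone tuple of minima stays fixed under sorting; uniqueness of ordering -/
lemma perm_eq_of_comp_monotone {g : Fin l → WithTop (Fin n)} (hinj : Function.Injective g)
    (hg : Monotone g) (σ : Equiv.Perm (Fin l)) (hσ : Monotone (g ∘ σ)) : σ = Equiv.refl _ := by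
  have h1 : g ∘ ⇑σ = g ∘ ⇑(Equiv.refl (Fin l)) := Tuple.unique_monotone hσ (by simpa using hg)
  exact Equiv.ext fun x => hinj (congrFun h1 x)

end Main2

section Main3
variable (K : Type*) [Field K] [CharZero K] {n l m : ℕ}

lemma group_perms (hm : Even m) (hm1 : 1 ≤ m) (c : Finset (Fin n) → K) :
    ∑ f ∈ ((Fintype.piFinset (fun _ : Fin l => Finset.powersetCard m (Finset.univ : Finset (Fin n))))).filter (fun f => ∀ i j, i ≠ j → Disjoint (f i) (f j)),
        (∏ t, c (f t)) • FL K n (flatS f)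
      = l.factorial • ∑ f ∈ ((Fintype.piFinset (fun _ : Fin l => Finset.powersetCard m (Finset.univ : Finset (Fin n))))).filter
            (fun f => (∀ i j, i ≠ j → Disjoint (f i) (f j))
              ∧ ∀ i j, i < j → (f i).min < (f j).min),
          (∏ t, c (f t)) • FL K n (flatS f) := by
  classical
  set G : (Fin l → Finset (Fin n)) → ExteriorAlgebra K (Fin n → K) :=
    fun f => (∏ t, c (f t)) • FL K n (flatS f) with hG
  set D := ((Fintype.piFinset (fun _ : Fin l => Finset.powersetCard m (Finset.univ : Finset (Fin n))))).filter (fun f => ∀ i j, i ≠ j → Disjoint (f i) (f j)) with hD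
  set C := ((Fintype.piFinset (fun _ : Fin l => Finset.powersetCard m (Finset.univ : Finset (Fin n))))).filter
    (fun f => (∀ i j, i ≠ j → Disjoint (f i) (f j))
      ∧ ∀ i j, i < j → (f i).min < (f j).min) with hC
  have hcards : ∀ f, f ∈ (Fintype.piFinset (fun _ : Fin l => Finset.powersetCard m (Finset.univ : Finset (Fin n)))) → ∀ i, (f i).card = m := fun f hf i =>
    (Finset.mem_powersetCard.mp (Fintype.mem_piFinset.mp hf i)).2
  -- invariance of G under permutation of blocks
  have hGinv : ∀ f ∈ (Fintype.piFinset (fun _ : Fin l => Finset.powersetCard m (Finset.univ : Finset (Fin n)))), ∀ σ : Equiv.Perm (Fin l), G (f ∘ σ) = G f := by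
    intro f hf σ
    rw [hG]
    dsimp only
    rw [FL_flat_comp_perm K hm f (hcards f hf) σ]
    congr 1
    exact Equiv.prod_comp σ (fun t => c (f t))
  -- permutation composition stays in piF and D
  have hcomp_piF : ∀ f ∈ (Fintype.piFinset (fun _ : Fin l => Finset.powersetCard m (Finset.univ : Finset (Fin n)))), ∀ σ : Equiv.Perm (Fin l), f ∘ ⇑σ ∈ (Fintype.piFinset (fun _ : Fin l => Finset.powersetCard m (Finset.univ : Finset (Fin n)))) := by
    intro f hf σ
    rw [Fintype.mem_piFinset]
    intro i
    exact Fintype.mem_piFinset.mp hf (σ i)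
  have hbij : ∑ p ∈ (Finset.univ : Finset (Equiv.Perm (Fin l))) ×ˢ C, G (p.2 ∘ ⇑p.1)
      = ∑ g ∈ D, G g := by
    refine Finset.sum_nbij' (fun p => p.2 ∘ ⇑p.1)
      (fun g => ((Tuple.sort (fun i => (g i).min))⁻¹, g ∘ ⇑(Tuple.sort (fun i => (g i).min))))
      ?_ ?_ ?_ ?_ ?_
    · -- maps into D
      rintro ⟨σ, f⟩ hp
      rw [Finset.mem_product] at hp
      obtain ⟨-, hfC⟩ := hp
      rw [hC, Finset.mem_filter] at hfC
      rw [hD, Finset.mem_filter]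
      refine ⟨hcomp_piF f hfC.1 σ, fun i j hij => hfC.2.1 (σ i) (σ j) (fun h => hij (σ.injective h))⟩
    · -- maps into univ ×ˢ C
      intro g hg
      rw [hD, Finset.mem_filter] at hg
      obtain ⟨hgpi, hgdisj⟩ := hg
      set τ := Tuple.sort (fun i => (g i).min) with hτ
      rw [Finset.mem_product]
      refine ⟨Finset.mem_univ _, ?_⟩
      rw [hC, Finset.mem_filter]
      refine ⟨hcomp_piF g hgpi τ, fun i j hij => hgdisj (τ i) (τ j) (fun h => hij (τ.injective h)), ?_⟩
      -- strict minima
      have hmono : Monotone ((fun i => (g i).min) ∘ ⇑τ) := Tuple.monotone_sort _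
      have hinj : Function.Injective (fun i => (g i).min) :=
        min_injective hm1 (hcards g hgpi) hgdisj
      have hstrict : StrictMono ((fun i => (g i).min) ∘ ⇑τ) :=
        hmono.strictMono_of_injective (hinj.comp τ.injective)
      intro i j hij
      exact hstrict hij
    · -- left inverse
      rintro ⟨σ, f⟩ hp
      rw [Finset.mem_product] at hp
      obtain ⟨-, hfC⟩ := hp
      rw [hC, Finset.mem_filter] at hfC
      obtain ⟨hfpi, hdisj, hmini⟩ := hfC
      have hinj : Function.Injective (fun i => (f i).min) :=
        min_injective hm1 (hcards f hfpi) hdisj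
      have hgmono : Monotone (fun i => (f i).min) := by
        intro i j hij
        rcases eq_or_lt_of_le hij with rfl | h
        · exact le_rfl
        · exact (hmini i j h).le
      set τ := Tuple.sort (fun i => ((f ∘ ⇑σ) i).min) with hτ
      have hmono2 : Monotone ((fun i => ((f ∘ ⇑σ) i).min) ∘ ⇑τ) := Tuple.monotone_sort _
      have heq : (fun i => ((f ∘ ⇑σ) i).min) = (fun i => (f i).min) ∘ ⇑σ := rfl
      have hmono3 : Monotone ((fun i => (f i).min) ∘ ⇑(τ.trans σ)) := by
        have : (fun i => (f i).min) ∘ ⇑(τ.trans σ) = ((fun i => ((f ∘ ⇑σ) i).min) ∘ ⇑τ) := rfl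
        rw [this]; exact hmono2
      have hρ : τ.trans σ = Equiv.refl _ :=
        perm_eq_of_comp_monotone hinj hgmono _ hmono3
      have hτeq : τ = σ⁻¹ := by
        have : σ * τ = 1 :=
          Equiv.ext fun x => congrArg (fun e : Equiv.Perm (Fin l) => e x) hρ
        exact eq_inv_of_mul_eq_one_right this
      rw [Prod.mk.injEq]
      constructor
      · rw [hτeq, inv_inv]
      · funext x
        rw [hτeq]
        simp
    · -- right inverse
      intro g hg
      funext x
      simp
    · -- summand equality
      rintro ⟨σ, f⟩ _
      rfl
  rw [← hbij, Finset.sum_product]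
  have : ∀ σ : Equiv.Perm (Fin l), ∑ f ∈ C, G (f ∘ ⇑σ) = ∑ f ∈ C, G f := by
    intro σ
    refine Finset.sum_congr rfl fun f hf => ?_
    rw [hC, Finset.mem_filter] at hf
    exact hGinv f hf.1 σ
  rw [Finset.sum_congr rfl fun σ _ => this σ, Finset.sum_const, Finset.card_univ,
    Fintype.card_perm, Fintype.card_fin]

end Main3

section Main4
variable (K : Type*) [Field K] [CharZero K] {n l m : ℕ}

set_option maxHeartbeats 1000000 in
lemma fiber_sum (hm1 : 1 ≤ m) (c : Finset (Fin n) → K) :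
    ∑ f ∈ (Fintype.piFinset
        (fun _ : Fin l => Finset.powersetCard m (Finset.univ : Finset (Fin n)))).filter
          (fun f => (∀ i j, i ≠ j → Disjoint (f i) (f j))
            ∧ ∀ i j, i < j → (f i).min < (f j).min),
        (∏ t, c (f t)) • FL K n (flatS f)
      = ∑ A ∈ Finset.powersetCard (m * l) (Finset.univ : Finset (Fin n)),
          hpfEval K m l A c • eWedge K n A := by
  set C := (Fintype.piFinset
      (fun _ : Fin l => Finset.powersetCard m (Finset.univ : Finset (Fin n)))).filter
        (fun f => (∀ i j, i ≠ j → Disjoint (f i) (f j))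
          ∧ ∀ i j, i < j → (f i).min < (f j).min) with hC
  have hmaps : ∀ f ∈ C, Finset.univ.sup f
      ∈ Finset.powersetCard (m * l) (Finset.univ : Finset (Fin n)) := by
    intro f hf
    obtain ⟨hfpi, hdisj, -⟩ := Finset.mem_filter.mp hf
    rw [Finset.mem_powersetCard]
    refine ⟨Finset.subset_univ _, ?_⟩
    rw [Finset.sup_eq_biUnion, Finset.card_biUnion (fun i _ j _ hij => hdisj i j hij)]
    have : ∀ i : Fin l, (f i).card = m := fun i =>
      (Finset.mem_powersetCard.mp (Fintype.mem_piFinset.mp hfpi i)).2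
    simp [this, Finset.sum_const, mul_comm]
  rw [← Finset.sum_fiberwise_of_maps_to hmaps]
  refine Finset.sum_congr rfl fun A hA => ?_
  have hterm : ∀ f ∈ C.filter (fun f => Finset.univ.sup f = A),
      (∏ t, c (f t)) • FL K n (flatS f)
        = ((blocksSign (List.ofFn f) : K) * ∏ t, c (f t)) • eWedge K n A := by
    intro f hf
    obtain ⟨hfC, hsup⟩ := Finset.mem_filter.mp hf
    obtain ⟨hfpi, hdisj, hmini⟩ := Finset.mem_filter.mp hfC
    rw [FL_eq_listSign_smul K (flat_nodup hdisj), flat_toFinset, hsup, smul_smul, mul_comm]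
    rfl
  rw [Finset.sum_congr rfl hterm, ← Finset.sum_smul]
  congr 1
  have h1 : ∑ f ∈ C.filter (fun f => Finset.univ.sup f = A), ((blocksSign (List.ofFn f) : K) * ∏ t, c (f t))
      = ∑ f ∈ C.filter (fun f => Finset.univ.sup f = A),
          (if ((∀ i j : Fin l, i ≠ j → Disjoint (f i) (f j)) ∧ Finset.univ.sup f = A ∧
        (∀ i j : Fin l, i < j → (f i).min < (f j).min)) then ((blocksSign (List.ofFn f) : K) * ∏ t, c (f t)) else 0) := by
    refine Finset.sum_congr rfl fun f hf => ?_
    obtain ⟨hfC, hsup⟩ := Finset.mem_filter.mp hf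
    obtain ⟨-, hdisj, hmini⟩ := Finset.mem_filter.mp hfC
    exact (if_pos ⟨hdisj, hsup, hmini⟩).symm
  have h2 : ∑ f ∈ C.filter (fun f => Finset.univ.sup f = A), (if ((∀ i j : Fin l, i ≠ j → Disjoint (f i) (f j)) ∧ Finset.univ.sup f = A ∧
        (∀ i j : Fin l, i < j → (f i).min < (f j).min)) then ((blocksSign (List.ofFn f) : K) * ∏ t, c (f t)) else 0)
      = ∑ f ∈ Fintype.piFinset
          (fun _ : Fin l => Finset.powersetCard m (Finset.univ : Finset (Fin n))),
          (if ((∀ i j : Fin l, i ≠ j → Disjoint (f i) (f j)) ∧ Finset.univ.sup f = A ∧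
        (∀ i j : Fin l, i < j → (f i).min < (f j).min)) then ((blocksSign (List.ofFn f) : K) * ∏ t, c (f t)) else 0) := by
    refine Finset.sum_subset ((Finset.filter_subset _ _).trans (Finset.filter_subset _ _)) ?_
    intro f hf hnf
    refine if_neg fun hPf => hnf ?_
    obtain ⟨hdisj, hsup, hmini⟩ := hPf
    exact Finset.mem_filter.mpr ⟨Finset.mem_filter.mpr ⟨hf, hdisj, hmini⟩, hsup⟩
  have hsub : Fintype.piFinset (fun _ : Fin l => Finset.powersetCard m A)
      ⊆ Fintype.piFinset
          (fun _ : Fin l => Finset.powersetCard m (Finset.univ : Finset (Fin n))) := by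
    intro f hf
    rw [Fintype.mem_piFinset] at hf ⊢
    intro i
    exact Finset.mem_powersetCard.mpr
      ⟨Finset.subset_univ _, (Finset.mem_powersetCard.mp (hf i)).2⟩
  have h3 : ∑ f ∈ Fintype.piFinset
        (fun _ : Fin l => Finset.powersetCard m (Finset.univ : Finset (Fin n))),
        (if ((∀ i j : Fin l, i ≠ j → Disjoint (f i) (f j)) ∧ Finset.univ.sup f = A ∧
        (∀ i j : Fin l, i < j → (f i).min < (f j).min)) then ((blocksSign (List.ofFn f) : K) * ∏ t, c (f t)) else 0)
      = ∑ f ∈ Fintype.piFinset (fun _ : Fin l => Finset.powersetCard m A),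
        (if ((∀ i j : Fin l, i ≠ j → Disjoint (f i) (f j)) ∧ Finset.univ.sup f = A ∧
        (∀ i j : Fin l, i < j → (f i).min < (f j).min)) then ((blocksSign (List.ofFn f) : K) * ∏ t, c (f t)) else 0) := by
    refine (Finset.sum_subset hsub ?_).symm
    intro f hf hnf
    refine if_neg fun hPf => hnf ?_
    obtain ⟨hdisj, hsup, hmini⟩ := hPf
    rw [Fintype.mem_piFinset]
    intro i
    refine Finset.mem_powersetCard.mpr
      ⟨?_, (Finset.mem_powersetCard.mp (Fintype.mem_piFinset.mp hf i)).2⟩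
    have hle := Finset.le_sup (f := f) (Finset.mem_univ i)
    rwa [hsup] at hle
  rw [h1, h2, h3, hpfEval]

end Main4


/-- For even `m ≥ 2` and `v = Σ_I c(I)·e_I ∈ ⋀^m K^n`, one has
`v^{∧l} = l!·Σ_A hpf^{(m,l)}_A(v)·e_A`, and consequently `v^{∧l} = 0` iff all the
hyper-Pfaffian forms `hpf^{(m,l)}_A` vanish at `v`. -/
theorem pow_eq_factorial_smul_sum_hpf (K : Type*) [Field K] [CharZero K]
    (m l n : ℕ) (hm : Even m) (hm2 : 2 ≤ m) (hl : 1 ≤ l) (hn : 1 ≤ n)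
    (c : Finset (Fin n) → K)
    (v : ExteriorAlgebra K (Fin n → K))
    (hv : v = ∑ I ∈ Finset.powersetCard m (Finset.univ : Finset (Fin n)),
      c I • eWedge K n I) :
    v ^ l = (l.factorial : K) •
        ∑ A ∈ Finset.powersetCard (m * l) (Finset.univ : Finset (Fin n)),
          hpfEval K m l A c • eWedge K n A ∧
    (v ^ l = 0 ↔
      ∀ A ∈ Finset.powersetCard (m * l) (Finset.univ : Finset (Fin n)),
        hpfEval K m l A c = 0) := by
  have hm1 : 1 ≤ m := le_trans (by norm_num) hm2
  have key : v ^ l = (l.factorial : K) •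
      ∑ A ∈ Finset.powersetCard (m * l) (Finset.univ : Finset (Fin n)),
        hpfEval K m l A c • eWedge K n A := by
    subst hv
    rw [pow_expand K m l c]
    have hprune : ∀ f ∈ Fintype.piFinset
        (fun _ : Fin l => Finset.powersetCard m (Finset.univ : Finset (Fin n))),
        (∏ t, c (f t)) • FL K n (flatS f) ≠ 0 → (∀ i j, i ≠ j → Disjoint (f i) (f j)) := by
      intro f hf hne
      by_contra hnd
      apply hne
      have : ¬ (flatS f).Nodup := fun h => hnd (disjoint_of_flat_nodup h)
      rw [FL_eq_zero_of_not_nodup K this, smul_zero]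
    rw [← Finset.sum_filter_of_ne hprune, group_perms K hm hm1 c, fiber_sum K hm1 c,
      Nat.cast_smul_eq_nsmul]
  refine ⟨key, ?_, ?_⟩
  · intro h0
    have hfac : (l.factorial : K) ≠ 0 := Nat.cast_ne_zero.mpr l.factorial_ne_zero
    have hS : ∑ A ∈ Finset.powersetCard (m * l) (Finset.univ : Finset (Fin n)),
        hpfEval K m l A c • eWedge K n A = 0 := by
      rw [key] at h0
      exact (smul_eq_zero.mp h0).resolve_left hfac
    exact eWedge_linearIndependent K hS
  · intro h
    rw [key, Finset.sum_eq_zero (fun A hA => by rw [h A hA, zero_smul]), smul_zero]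
end

section
/- Let K be a field of characteristic 0, let m ≥ 2 be even, and let l, n ≥ 1. If v ∈ ⋀^m K^n satisfies hpf^{(m,l)}_A(v) = 0 for every (m·l)-element subset A ⊆ {1,…,n}, then hpf^{(m,l+1)}_B(v) = 0 for every (m·(l+1))-element subset B ⊆ {1,…,n}. That is, the hyper-Pfaffian varieties are nested: HPf^{(m,l)}(K^n) ⊆ HPf^{(m,l+1)}(K^n). -/
open scoped BigOperators

def cnt {α : Type*} [LinearOrder α] (a : α) (L : List α) : ℕ :=
  (Finset.univ.filter fun i : Fin L.length => L.get i < a).card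

lemma inv_eq {α : Type*} [LinearOrder α] (L : List α) :
    inversions L = ∑ i : Fin L.length, ∑ j : Fin L.length,
      if (i : ℕ) < j ∧ L.get j < L.get i then 1 else 0 := by
  rw [inversions, Finset.card_filter, Fintype.sum_prod_type]
  refine Finset.sum_congr rfl fun i _ => Finset.sum_congr rfl fun j _ => ?_
  congr 1

lemma cnt_eq {α : Type*} [LinearOrder α] (a : α) (L : List α) :
    cnt a L = ∑ i : Fin L.length, if L.get i < a then 1 else 0 := by
  rw [cnt, Finset.card_filter]

lemma cnt_cons {α : Type*} [LinearOrder α] (x a : α) (L : List α) :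
    cnt x (a :: L) = (if a < x then 1 else 0) + cnt x L := by
  rw [cnt_eq, cnt_eq]
  simp only [List.length_cons]
  rw [Fin.sum_univ_succ]
  simp
  congr

lemma inv_cons {α : Type*} [LinearOrder α] (a : α) (L : List α) :
    inversions (a :: L) = cnt a L + inversions L := by
  rw [inv_eq, inv_eq, cnt_eq]
  simp only [List.length_cons]
  rw [Fin.sum_univ_succ]
  congr 1
  · rw [Fin.sum_univ_succ]
    simp
  · refine Finset.sum_congr rfl fun i _ => ?_
    rw [Fin.sum_univ_succ]
    simp [Nat.succ_lt_succ_iff]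

lemma cnt_append {α : Type*} [LinearOrder α] (x : α) (M L : List α) :
    cnt x (M ++ L) = cnt x M + cnt x L := by
  induction M with
  | nil => simp [cnt_eq]
  | cons a M ih => rw [List.cons_append, cnt_cons, ih, cnt_cons]; omega

lemma inv_append {α : Type*} [LinearOrder α] (M L : List α) :
    inversions (M ++ L) = inversions M + inversions L
      + ∑ i : Fin M.length, cnt (M.get i) L := by
  induction M with
  | nil => simp [inv_eq, cnt_eq]
  | cons a M ih =>
    rw [List.cons_append, inv_cons, ih, cnt_append, inv_cons]
    simp only [List.length_cons]
    rw [Fin.sum_univ_succ]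
    simp only [List.get_cons_zero, List.get_cons_succ, List.get_eq_getElem,
      List.getElem_cons_succ, Fin.val_succ, List.getElem_cons_zero, Fin.val_zero]
    omega

lemma inv_sorted {α : Type*} [LinearOrder α] {L : List α} (h : L.Pairwise (· ≤ ·)) :
    inversions L = 0 := by
  rw [inv_eq]
  refine Finset.sum_eq_zero fun i _ => Finset.sum_eq_zero fun j _ => ?_
  rw [if_neg]
  rintro ⟨h1, h2⟩
  exact absurd (List.Pairwise.rel_get_of_lt h h1) (not_le.2 h2)

lemma get_sum_toFinset {α : Type*} [LinearOrder α] {s : List α} (hs : s.Nodup)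
    (F : α → ℕ) : ∑ i : Fin s.length, F (s.get i) = ∑ a ∈ s.toFinset, F a := by
  refine Finset.sum_bij (fun i _ => s.get i) (fun i _ => ?_) (fun i _ j _ hij => ?_)
    (fun a ha => ?_) (fun i _ => rfl)
  · exact List.mem_toFinset.2 (s.get_mem _)
  · exact (List.nodup_iff_injective_get.1 hs) hij
  · obtain ⟨i, hi⟩ := List.mem_iff_get.1 (List.mem_toFinset.1 ha)
    exact ⟨i, Finset.mem_univ _, hi⟩

lemma cnt_nodup {α : Type*} [LinearOrder α] {L : List α} (hL : L.Nodup) (a : α) :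
    cnt a L = (L.toFinset.filter (· < a)).card := by
  rw [cnt_eq, Finset.card_filter, get_sum_toFinset hL (fun b => if b < a then 1 else 0)]

lemma cnt_flatMap {α β : Type*} [LinearOrder α] (x : α) (f : β → List α) (Is : List β) :
    cnt x (Is.flatMap f) = (Is.map fun I => cnt x (f I)).sum := by
  induction Is with
  | nil => simp [cnt_eq]
  | cons a Is ih => rw [List.flatMap_cons, cnt_append, ih, List.map_cons, List.sum_cons]

lemma partition_filter_card {α : Type*} [LinearOrder α] [DecidableEq α] {l : ℕ} (g : Fin l → Finset α)
    (hdisj : ∀ i j, i ≠ j → Disjoint (g i) (g j)) (p : α → Prop) [DecidablePred p] :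
    ∑ j : Fin l, ((g j).filter p).card = ((Finset.univ.sup g).filter p).card := by
  rw [Finset.sup_eq_biUnion, Finset.filter_biUnion, Finset.card_biUnion]
  intro i _ j _ hij
  exact (hdisj i j hij).mono (Finset.filter_subset _ _) (Finset.filter_subset _ _)

lemma blocksSign_cons {α : Type*} [LinearOrder α] [DecidableEq α] (I : Finset α) {l : ℕ}
    (g : Fin l → Finset α) (D : Finset α)
    (hdisj : ∀ i j, i ≠ j → Disjoint (g i) (g j))
    (hD : Finset.univ.sup g = D) :
    blocksSign (I :: List.ofFn g) =
      (-1) ^ (∑ a ∈ I, (D.filter (· < a)).card) *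
        blocksSign (List.ofFn g) := by
  subst hD
  rw [blocksSign, blocksSign, List.flatMap_cons, listSign, listSign, inv_append,
    inv_sorted (Finset.pairwise_sort _ _)]
  have h1 : ∑ i : Fin (I.sort (· ≤ ·)).length,
      cnt ((I.sort (· ≤ ·)).get i) ((List.ofFn g).flatMap fun J => J.sort (· ≤ ·))
      = ∑ a ∈ I, ((Finset.univ.sup g).filter (· < a)).card := by
    rw [get_sum_toFinset (Finset.sort_nodup I (· ≤ ·))
      (fun a => cnt a ((List.ofFn g).flatMap fun J => J.sort (· ≤ ·))),
      Finset.sort_toFinset]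
    refine Finset.sum_congr rfl fun a _ => ?_
    rw [cnt_flatMap, List.map_ofFn, List.sum_ofFn]
    rw [← partition_filter_card g hdisj]
    refine Finset.sum_congr rfl fun j _ => ?_
    show cnt a ((g j).sort (· ≤ ·)) = _
    rw [cnt_nodup (Finset.sort_nodup (g j) (· ≤ ·)), Finset.sort_toFinset]
  rw [h1, pow_add, pow_add]
  ring

/-- The hyper-Pfaffian varieties are nested: if `v = Σ_I c(I)·e_I ∈ ⋀^m K^n`
(with `m ≥ 2` even) satisfies `hpf^{(m,l)}_A(v) = 0` for every `(m·l)`-element subset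
`A ⊆ {1,…,n}`, then `hpf^{(m,l+1)}_B(v) = 0` for every `(m·(l+1))`-element subset `B`;
i.e. `HPf^{(m,l)}(K^n) ⊆ HPf^{(m,l+1)}(K^n)`. -/
theorem hpf_nested (K : Type*) [Field K] [CharZero K]
    (m l n : ℕ) (hm : Even m) (hm2 : 2 ≤ m) (hl : 1 ≤ l) (hn : 1 ≤ n)
    (c : Finset (Fin n) → K)
    (v : ExteriorAlgebra K (Fin n → K))
    (hv : v = ∑ I ∈ Finset.powersetCard m (Finset.univ : Finset (Fin n)),
      c I • eWedge K n I)
    (h : ∀ A ∈ Finset.powersetCard (m * l) (Finset.univ : Finset (Fin n)),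
      hpfEval K m l A c = 0) :
    ∀ B ∈ Finset.powersetCard (m * (l + 1)) (Finset.univ : Finset (Fin n)),
      hpfEval K m (l + 1) B c = 0 := by
  intro B hB
  rw [Finset.mem_powersetCard] at hB
  obtain ⟨hBsub, hBcard⟩ := hB
  have hBne : B.Nonempty := Finset.card_pos.1 (by rw [hBcard]; nlinarith)
  set μ := B.min' hBne with hμ
  set T : (Fin (l + 1) → Finset (Fin n)) → K := fun f =>
    if (∀ i j : Fin (l + 1), i ≠ j → Disjoint (f i) (f j)) ∧ Finset.univ.sup f = B ∧
        (∀ i j : Fin (l + 1), i < j → (f i).min < (f j).min) then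
      (blocksSign (List.ofFn f) : K) * ∏ t, c (f t)
    else 0 with hT
  have hre : hpfEval K m (l + 1) B c = ∑ I ∈ Finset.powersetCard m B,
      ∑ g ∈ Fintype.piFinset (fun _ : Fin l => Finset.powersetCard m B),
        T (Fin.cons I g) := by
    rw [← Finset.sum_product']
    rw [hpfEval]
    refine Finset.sum_nbij' (fun f => (f 0, Fin.tail f)) (fun p => Fin.cons p.1 p.2)
      ?_ ?_ ?_ ?_ ?_
    · intro f hf
      rw [Fintype.mem_piFinset] at hf
      exact Finset.mem_product.2 ⟨hf 0, Fintype.mem_piFinset.2 fun j => hf j.succ⟩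
    · intro p hp
      obtain ⟨h1, h2⟩ := Finset.mem_product.1 hp
      rw [Fintype.mem_piFinset] at h2 ⊢
      intro i
      refine Fin.cases ?_ ?_ i
      · simpa using h1
      · intro j; simpa using h2 j
    · intro f _; exact Fin.cons_self_tail f
    · intro p _; simp
    · intro f _; rw [hT]; simp only; rw [Fin.cons_self_tail]
  rw [hre]
  refine Finset.sum_eq_zero fun I hI => ?_
  obtain ⟨hIsub, hIcard⟩ := Finset.mem_powersetCard.1 hI
  have hIne : I.Nonempty := Finset.card_pos.1 (by omega)
  by_cases hmin : μ ∈ I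
  · -- head block contains the minimum of B
    have hDcard : (B \ I).card = m * l := by
      rw [Finset.card_sdiff_of_subset hIsub, hBcard, hIcard]; ring_nf; omega
    have h0 : hpfEval K m l (B \ I) c = 0 :=
      h _ (Finset.mem_powersetCard.2 ⟨Finset.subset_univ _, hDcard⟩)
    have hsubset : Fintype.piFinset (fun _ : Fin l => Finset.powersetCard m (B \ I)) ⊆
        Fintype.piFinset (fun _ : Fin l => Finset.powersetCard m B) :=
      Fintype.piFinset_subset _ _ fun _ => Finset.powersetCard_mono Finset.sdiff_subset
    have hz : ∀ g ∈ Fintype.piFinset (fun _ : Fin l => Finset.powersetCard m B),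
        g ∉ Fintype.piFinset (fun _ : Fin l => Finset.powersetCard m (B \ I)) →
        T (Fin.cons I g) = 0 := by
      intro g hgB hgD
      rw [hT]; simp only
      rw [if_neg]
      rintro ⟨hdisj, hsup, -⟩
      apply hgD
      rw [Fintype.mem_piFinset] at hgB ⊢
      intro j
      have hj := hgB j
      rw [Finset.mem_powersetCard] at hj ⊢
      refine ⟨Finset.subset_sdiff.2 ⟨?_, ?_⟩, hj.2⟩
      · have hle := Finset.le_sup (f := Fin.cons I g) (Finset.mem_univ j.succ)
        rw [Fin.cons_succ] at hle
        exact hsup ▸ hle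
      · have := hdisj j.succ 0 (Fin.succ_ne_zero j)
        rwa [Fin.cons_succ, Fin.cons_zero] at this
    rw [← Finset.sum_subset hsubset hz]
    set U : (Fin l → Finset (Fin n)) → K := fun g =>
      if (∀ i j : Fin l, i ≠ j → Disjoint (g i) (g j)) ∧ Finset.univ.sup g = B \ I ∧
          (∀ i j : Fin l, i < j → (g i).min < (g j).min) then
        (blocksSign (List.ofFn g) : K) * ∏ t, c (g t)
      else 0 with hU
    have hUeq : (∑ g ∈ Fintype.piFinset (fun _ : Fin l => Finset.powersetCard m (B \ I)),
        U g) = hpfEval K m l (B \ I) c := by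
      rw [hpfEval]
    have hterm : ∀ g ∈ Fintype.piFinset (fun _ : Fin l => Finset.powersetCard m (B \ I)),
        T (Fin.cons I g) =
          ((-1 : K) ^ (∑ a ∈ I, ((B \ I).filter (· < a)).card) * c I) * U g := by
      intro g hg
      rw [Fintype.mem_piFinset] at hg
      have hgD : ∀ j, g j ⊆ B \ I ∧ (g j).card = m := fun j =>
        Finset.mem_powersetCard.1 (hg j)
      have hgne : ∀ j, (g j).Nonempty := fun j =>
        Finset.card_pos.1 (by rw [(hgD j).2]; omega)
      have hgB : ∀ j, g j ⊆ B := fun j => (hgD j).1.trans Finset.sdiff_subset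
      have hIg : ∀ j, Disjoint I (g j) := fun j =>
        (Finset.sdiff_disjoint.mono_left (hgD j).1).symm
      have hiff0 : ∀ f' : Fin (l + 1) → Finset (Fin n), f' = Fin.cons I g →
          (((∀ i j : Fin (l+1), i ≠ j → Disjoint (f' i) (f' j)) ∧
          Finset.univ.sup f' = B ∧
          (∀ i j : Fin (l+1), i < j → (f' i).min < (f' j).min)) ↔
          ((∀ i j : Fin l, i ≠ j → Disjoint (g i) (g j)) ∧
          Finset.univ.sup g = B \ I ∧
          (∀ i j : Fin l, i < j → (g i).min < (g j).min))) := by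
        intro f' hf'
        subst hf'
        constructor
        · rintro ⟨hd, hs, hmm⟩
          refine ⟨fun i j hij => ?_, ?_, fun i j hij => ?_⟩
          · have := hd i.succ j.succ fun e => hij (Fin.succ_injective _ e)
            rwa [Fin.cons_succ, Fin.cons_succ] at this
          · refine le_antisymm (Finset.sup_le fun j _ => (hgD j).1) fun b hb => ?_
            have hbB : b ∈ B := (Finset.mem_sdiff.1 hb).1
            have hbs : b ∈ Finset.univ.sup (Fin.cons I g) := hs ▸ hbB
            obtain ⟨i, -, hbi⟩ := Finset.mem_sup.1 hbs
            revert hbi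
            refine Fin.cases ?_ ?_ i
            · intro hbI; rw [Fin.cons_zero] at hbI
              exact absurd hbI (Finset.mem_sdiff.1 hb).2
            · intro j hbj; rw [Fin.cons_succ] at hbj
              exact Finset.mem_sup.2 ⟨j, Finset.mem_univ _, hbj⟩
          · have := hmm i.succ j.succ (by rwa [Fin.succ_lt_succ_iff])
            rwa [Fin.cons_succ, Fin.cons_succ] at this
        · rintro ⟨hd, hs, hmm⟩
          refine ⟨fun i j => ?_, ?_, fun i j => ?_⟩
          · refine Fin.cases ?_ ?_ i
            · refine Fin.cases ?_ ?_ j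
              · intro e; exact absurd rfl e
              · intro j' _; rw [Fin.cons_zero, Fin.cons_succ]; exact hIg j'
            · intro i'
              refine Fin.cases ?_ ?_ j
              · intro _; rw [Fin.cons_zero, Fin.cons_succ]; exact (hIg i').symm
              · intro j' hne; rw [Fin.cons_succ, Fin.cons_succ]
                exact hd i' j' fun e => hne (by rw [e])
          · refine le_antisymm (Finset.sup_le fun i _ => ?_) fun b hb => ?_
            · refine Fin.cases ?_ ?_ i
              · rw [Fin.cons_zero]; exact hIsub
              · intro j; rw [Fin.cons_succ]; exact hgB j
            · by_cases hbI : b ∈ I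
              · exact Finset.mem_sup.2 ⟨0, Finset.mem_univ _, by rwa [Fin.cons_zero]⟩
              · have hbs : b ∈ Finset.univ.sup g := hs ▸ Finset.mem_sdiff.2 ⟨hb, hbI⟩
                obtain ⟨j, -, hbj⟩ := Finset.mem_sup.1 hbs
                exact Finset.mem_sup.2 ⟨j.succ, Finset.mem_univ _, by rwa [Fin.cons_succ]⟩
          · refine Fin.cases ?_ ?_ j
            · intro hij; exact absurd hij (Fin.not_lt_zero i)
            · intro j'
              refine Fin.cases ?_ ?_ i
              · intro _; rw [Fin.cons_zero, Fin.cons_succ]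
                have hmem : (g j').min' (hgne j') ∈ B \ I :=
                  (hgD j').1 ((g j').min'_mem _)
                have hμlt : μ < (g j').min' (hgne j') :=
                  lt_of_le_of_ne (B.min'_le _ (Finset.mem_sdiff.1 hmem).1)
                    fun e => (Finset.mem_sdiff.1 hmem).2 (by rw [← e]; exact hmin)
                have hImin : I.min' hIne = μ :=
                  le_antisymm (I.min'_le _ hmin) (B.min'_le _ (hIsub (I.min'_mem hIne)))
                rw [← Finset.coe_min' hIne, ← Finset.coe_min' (hgne j'), hImin]
                exact WithTop.coe_lt_coe.2 hμlt
              · intro i' hij; rw [Fin.cons_succ, Fin.cons_succ]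
                exact hmm i' j' (by rwa [← Fin.succ_lt_succ_iff])
      have hiff := hiff0 _ rfl
      rw [hT, hU]; simp only
      by_cases hC : (∀ i j : Fin l, i ≠ j → Disjoint (g i) (g j)) ∧
          Finset.univ.sup g = B \ I ∧
          (∀ i j : Fin l, i < j → (g i).min < (g j).min)
      · rw [if_pos (hiff.2 hC), if_pos hC]
        have hofn : List.ofFn (Fin.cons I g) = I :: List.ofFn g := by
          rw [List.ofFn_succ]
          simp [Fin.cons_zero, Fin.cons_succ]
        rw [hofn, blocksSign_cons I g (B \ I) hC.1 hC.2.1]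
        push_cast
        rw [Fin.prod_univ_succ]
        simp only [Fin.cons_zero, Fin.cons_succ]
        ring
      · rw [if_neg fun hcc => hC (hiff.1 hcc), if_neg hC, mul_zero]
    rw [Finset.sum_congr rfl hterm, ← Finset.mul_sum, hUeq, h0, mul_zero]
  · -- head block misses the minimum: all terms vanish
    refine Finset.sum_eq_zero fun g hg => ?_
    rw [hT]; simp only
    rw [if_neg]
    rintro ⟨hdisj, hsup, hmins⟩
    have hμB : μ ∈ B := B.min'_mem hBne
    have hms : μ ∈ Finset.univ.sup (Fin.cons I g) := hsup ▸ hμB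
    obtain ⟨i, -, hi⟩ := Finset.mem_sup.1 hms
    revert hi
    refine Fin.cases ?_ ?_ i
    · intro hμI; rw [Fin.cons_zero] at hμI; exact hmin hμI
    · intro j hμgj
      rw [Fin.cons_succ] at hμgj
      have hlt := hmins 0 j.succ (Fin.succ_pos j)
      rw [Fin.cons_zero, Fin.cons_succ] at hlt
      have h1 : (g j).min ≤ (μ : WithTop (Fin n)) := Finset.min_le hμgj
      have h2 : (μ : WithTop (Fin n)) ≤ I.min := by
        rw [← Finset.coe_min' hIne]
        exact WithTop.coe_le_coe.2 (B.min'_le _ (hIsub (I.min'_mem hIne)))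
      exact absurd (h2.trans_lt (hlt.trans_le h1)) (lt_irrefl _)
end

section
/- Let K be a field of characteristic 0, let V be a K-vector space, and let p, k ≥ 1. Suppose ω₁,…,ω_k ∈ ⋀^p V are such that each ω_i can be written as ω_i = α_i ∧ γ_i with α_i ∈ ⋀^{a_i} V for some ODD integer a_i ≥ 1 and γ_i ∈ ⋀^{p−a_i} V. Then (ω₁ + ⋯ + ω_k)^{∧(k+1)} = 0 in ⋀^{p(k+1)} V. In particular, any element of ⋀^p V that is a sum of k decomposable elements of type π for an odd partition π of p (i.e., a partition having at least one odd part) has nilpotency degree at most k+1. -/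
section Aux

open ExteriorAlgebra

variable {K V : Type*} [Field K] [CharZero K] [AddCommGroup V] [Module K V]

/-- supercommutation with a generator -/
lemma ι_supercomm (v : V) {n : ℕ} {y : ExteriorAlgebra K V} (hy : y ∈ ⋀[K]^n V) :
    ι K v * y = ((-1 : ℤ) ^ n) • (y * ι K v) := by
  induction hy using Submodule.pow_induction_on_left' with
  | algebraMap r => simp [Algebra.commutes]
  | add x y i hx hy ihx ihy => rw [mul_add, add_mul, smul_add, ihx, ihy]
  | mem_mul m hm i x hx ih =>
      obtain ⟨w, rfl⟩ := hm
      have h1 : ι K v * ι K w = -(ι K w * ι K v) :=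
        eq_neg_of_add_eq_zero_left (ι_add_mul_swap v w)
      calc ι K v * (ι K w * x) = (ι K v * ι K w) * x := by rw [mul_assoc]
        _ = -(ι K w * (ι K v * x)) := by rw [h1, neg_mul, mul_assoc]
        _ = -(ι K w * (((-1 : ℤ) ^ i) • (x * ι K v))) := by rw [ih]
        _ = ((-1 : ℤ) ^ (i + 1)) • (ι K w * x * ι K v) := by
            rw [mul_smul_comm, pow_succ]
            rw [mul_neg_one, neg_smul, mul_assoc]

set_option linter.unusedSectionVars false

lemma supercomm {m n : ℕ} {x y : ExteriorAlgebra K V}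
    (hx : x ∈ ⋀[K]^m V) (hy : y ∈ ⋀[K]^n V) :
    x * y = ((-1 : ℤ) ^ (m * n)) • (y * x) := by
  induction hx using Submodule.pow_induction_on_left' with
  | algebraMap r => simp [Algebra.commutes]
  | add x x' i hx hx' ihx ihx' => rw [add_mul, mul_add, smul_add, ihx, ihx']
  | mem_mul m' hm' i x hx ih =>
      obtain ⟨v, rfl⟩ := hm'
      calc ι K v * x * y = ι K v * (x * y) := by rw [mul_assoc]
        _ = ((-1 : ℤ) ^ (i * n)) • (ι K v * (y * x)) := by rw [ih, mul_smul_comm]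
        _ = ((-1 : ℤ) ^ (i * n)) • ((ι K v * y) * x) := by rw [mul_assoc]
        _ = ((-1 : ℤ) ^ (i * n)) • ((((-1 : ℤ) ^ n) • (y * ι K v)) * x) := by
            rw [ι_supercomm v hy]
        _ = ((-1 : ℤ) ^ ((i + 1) * n)) • (y * (ι K v * x)) := by
            rw [smul_mul_assoc, smul_smul, ← pow_add, mul_assoc, add_mul, one_mul,
              add_comm (i * n)]

lemma sq_zero_of_odd {m : ℕ} (hm : Odd m) {x : ExteriorAlgebra K V}
    (hx : x ∈ ⋀[K]^m V) : x * x = 0 := by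
  have h := supercomm hx hx
  rw [(hm.mul hm).neg_one_pow, neg_smul, one_smul] at h
  have h2 : (2 : K) • (x * x) = 0 := by
    rw [two_smul]; nth_rewrite 2 [h]; exact add_neg_cancel _
  simpa using (smul_eq_zero.mp h2).resolve_left (by norm_num)

lemma eq_zero_of_self_eq_neg' {M : Type*} [AddCommGroup M] [Module K M] {z : M}
    (h : z = -z) : z = 0 := by
  have h2 : (2 : K) • z = 0 := by
    rw [two_smul]; nth_rewrite 2 [h]; exact add_neg_cancel _
  simpa using (smul_eq_zero.mp h2).resolve_left (by norm_num)

lemma sum_sq_nilpotent' {A : Type*} [Ring A] {I : Type*} [DecidableEq I]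
    (s : Finset I) (f : I → A)
    (hcomm : ∀ i ∈ s, ∀ j ∈ s, Commute (f i) (f j))
    (hsq : ∀ i ∈ s, f i * f i = 0) :
    (∑ i ∈ s, f i) ^ (s.card + 1) = 0 := by
  induction s using Finset.induction_on with
  | empty => simp
  | @insert a s ha ih =>
      have hT : (∑ i ∈ s, f i) ^ (s.card + 1) = 0 :=
        ih (fun i hi j hj => hcomm i (Finset.mem_insert_of_mem hi) j
            (Finset.mem_insert_of_mem hj))
          (fun i hi => hsq i (Finset.mem_insert_of_mem hi))
      have hC : Commute (f a) (∑ i ∈ s, f i) :=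
        Commute.sum_right _ _ _ fun i hi =>
          hcomm a (Finset.mem_insert_self a s) i (Finset.mem_insert_of_mem hi)
      rw [Finset.sum_insert ha, Finset.card_insert_of_notMem ha]
      rw [hC.add_pow]
      apply Finset.sum_eq_zero
      intro m hm
      rcases le_or_gt m 1 with h1 | h1
      · have : s.card + 1 + 1 - m = (s.card + 1) + (1 - m) := by omega
        rw [this, pow_add, hT, zero_mul, mul_zero, zero_mul]
      · have hfa2 : f a ^ 2 = 0 := by
          rw [sq, hsq a (Finset.mem_insert_self a s)]
        have : m = 2 + (m - 2) := by omega
        rw [this, pow_add, hfa2, zero_mul, zero_mul, zero_mul]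

end Aux

/-- If each `ω_i ∈ ⋀^p V` factors as `ω_i = α_i ∧ γ_i` with
`α_i ∈ ⋀^{a_i} V` for some odd `a_i ≥ 1` and `γ_i ∈ ⋀^{p−a_i} V`, then
`(ω₁ + ⋯ + ω_k)^{∧(k+1)} = 0`. In particular, a sum of `k` decomposable elements of an odd
partition type has nilpotency degree at most `k + 1`. -/
theorem sum_pow_succ_eq_zero_of_odd_factor (K V : Type*) [Field K] [CharZero K]
    [AddCommGroup V] [Module K V]
    (p k : ℕ) (hp : 1 ≤ p) (hk : 1 ≤ k)
    (ω α γ : Fin k → ExteriorAlgebra K V) (a : Fin k → ℕ)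
    (ha_odd : ∀ i, Odd (a i)) (ha1 : ∀ i, 1 ≤ a i) (hap : ∀ i, a i ≤ p)
    (hα : ∀ i, α i ∈ ⋀[K]^(a i) V)
    (hγ : ∀ i, γ i ∈ ⋀[K]^(p - a i) V)
    (hω : ∀ i, ω i = α i * γ i) :
    (∑ i, ω i) ^ (k + 1) = 0 := by
  have hωmem : ∀ i, ω i ∈ ⋀[K]^p V := by
    intro i
    rw [hω i]
    have := SetLike.mul_mem_graded (hα i) (hγ i)
    rwa [Nat.add_sub_cancel' (hap i)] at this
  have hsq : ∀ i, ω i * ω i = 0 := by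
    intro i
    have h0 : α i * α i = 0 := sq_zero_of_odd (ha_odd i) (hα i)
    have h1 : γ i * α i = ((-1 : ℤ) ^ ((p - a i) * a i)) • (α i * γ i) :=
      supercomm (hγ i) (hα i)
    rw [hω i]
    calc α i * γ i * (α i * γ i) = α i * (γ i * α i) * γ i := by noncomm_ring
      _ = ((-1 : ℤ) ^ ((p - a i) * a i)) • (α i * (α i * γ i) * γ i) := by
          rw [h1, mul_smul_comm, smul_mul_assoc]
      _ = ((-1 : ℤ) ^ ((p - a i) * a i)) • (α i * α i * (γ i * γ i)) := by
          noncomm_ring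
      _ = 0 := by rw [h0, zero_mul, smul_zero]
  rcases Nat.even_or_odd p with hpe | hpo
  · -- even case: all commute
    have hcomm : ∀ i j, Commute (ω i) (ω j) := by
      intro i j
      have := supercomm (hωmem i) (hωmem j)
      rwa [(hpe.mul_right p).neg_one_pow, one_smul] at this
    have := sum_sq_nilpotent' (Finset.univ : Finset (Fin k)) ω
      (fun i _ j _ => hcomm i j) (fun i _ => hsq i)
    rwa [Finset.card_univ, Fintype.card_fin] at this
  · -- odd case: S² = 0
    have hanti : ∀ i j, ω i * ω j = -(ω j * ω i) := by
      intro i j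
      have := supercomm (hωmem i) (hωmem j)
      rwa [(hpo.mul hpo).neg_one_pow, neg_smul, one_smul] at this
    set S := ∑ i, ω i with hS
    have hS2 : S * S = 0 := by
      apply eq_zero_of_self_eq_neg' (K := K)
      rw [hS, Finset.sum_mul_sum]
      have h1 : ∑ i, ∑ j, ω i * ω j = ∑ i, ∑ j, -(ω j * ω i) :=
        Finset.sum_congr rfl fun i _ => Finset.sum_congr rfl fun j _ => hanti i j
      conv_lhs => rw [h1, Finset.sum_comm]
      simp only [Finset.sum_neg_distrib]
    have hk1 : k + 1 = (k - 1) + 2 := by omega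
    rw [hk1, pow_add, sq, hS2, mul_zero]
end

section
/- Let K be an infinite field, let n, p ≥ 1, let ω ∈ ⋀^p K^n, and let F₁, F₂ : ⋀^p K^n → K be polynomial functions (i.e., each is given by evaluating a polynomial in the coordinates with respect to the standard basis of ⋀^p K^n). Suppose there exist invertible linear maps g₁, g₂ ∈ GL_n(K) such that F₁((⋀^p g₁)(ω)) ≠ 0 and F₂((⋀^p g₂)(ω)) ≠ 0. Then there exist scalars λ, μ ∈ K such that the linear map g = λ·g₁ + μ·g₂ is invertible and simultaneously F₁((⋀^p g)(ω)) ≠ 0 and F₂((⋀^p g)(ω)) ≠ 0. -/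
open Finset ExteriorAlgebra in
private lemma eWedge_eq_iMulti {K : Type*} [Field K] {n p : ℕ} (I : Finset (Fin n))
    (h : I.card = p) :
    eWedge K n I =
      ιMulti K p (fun i => Pi.single (I.orderEmbOfFin h i) (1 : K)) := by
  subst h
  rw [ιMulti_apply, eWedge]
  congr 1
  apply List.ext_getElem
  · simp
  · intro i h1 h2
    simp [Finset.orderEmbOfFin_apply]

open Finset ExteriorAlgebra in
private lemma mem_span_eWedge {K : Type*} [Field K] {n p : ℕ}
    (x : ExteriorAlgebra K (Fin n → K)) (hx : x ∈ ⋀[K]^p (Fin n → K)) :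
    ∃ d : Finset (Fin n) → K,
      x = ∑ I ∈ powersetCard p (univ : Finset (Fin n)), d I • eWedge K n I := by
  classical
  set w : {I : Finset (Fin n) // I ∈ powersetCard p (univ : Finset (Fin n))} →
      ExteriorAlgebra K (Fin n → K) := fun I => eWedge K n I.1 with hw
  have hsp : x ∈ Submodule.span K (Set.range w) := by
    rw [← ιMulti_span_fixedDegree] at hx
    refine Submodule.span_le.2 ?_ hx
    rintro _ ⟨v, rfl⟩
    -- expand v in the standard basis
    have hv : ∀ i : Fin p, v i = ∑ j : Fin n, v i j • (Pi.single j (1 : K) : Fin n → K) := by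
      intro i
      funext k
      rw [Finset.sum_apply]
      simp [Pi.single_apply, eq_comm]
    have base : ∀ r : Fin p → Fin n,
        ιMulti K p (fun i => Pi.single (r i) (1 : K)) ∈ Submodule.span K (Set.range w) := by
      intro r
      by_cases hr : Function.Injective r
      · set I : Finset (Fin n) := Finset.image r Finset.univ with hI
        have hcard : I.card = p := by
          rw [hI, Finset.card_image_of_injective _ hr, card_univ, Fintype.card_fin]
        have hmemI : ∀ i, r i ∈ I := fun i => mem_image_of_mem r (mem_univ i)
        set eIso := I.orderIsoOfFin hcard with heIso
        set σ : Fin p → Fin p := fun i => eIso.symm ⟨r i, hmemI i⟩ with hσdef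
        have hσ : ∀ i, (I.orderEmbOfFin hcard) (σ i) = r i := by
          intro i
          have : eIso (σ i) = ⟨r i, hmemI i⟩ := eIso.apply_symm_apply _
          rw [← Finset.coe_orderIsoOfFin_apply, this]
        have hσinj : Function.Injective σ := by
          intro i j hij
          have := congrArg (I.orderEmbOfFin hcard) hij
          rw [hσ, hσ] at this
          exact hr this
        set σe : Equiv.Perm (Fin p) :=
          Equiv.ofBijective σ (Finite.injective_iff_bijective.1 hσinj) with hσe
        have hcomp : (fun i => Pi.single (r i) (1 : K)) =
            (fun i => Pi.single ((I.orderEmbOfFin hcard) i) (1 : K)) ∘ σe := by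
          funext i
          simp only [Function.comp_apply, hσe, Equiv.ofBijective_apply, hσ]
        rw [hcomp, AlternatingMap.map_perm, ← eWedge_eq_iMulti I hcard]
        have hmem : eWedge K n I ∈ Submodule.span K (Set.range w) := by
          apply Submodule.subset_span
          exact ⟨⟨I, by rw [mem_powersetCard_univ]; exact hcard⟩, rfl⟩
        rcases Int.units_eq_one_or (Equiv.Perm.sign σe) with h | h <;> rw [h]
        · simpa using hmem
        · simpa using (Submodule.span K (Set.range w)).neg_mem hmem
      · rw [AlternatingMap.map_eq_zero_of_not_injective]
        · exact Submodule.zero_mem _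
        · intro h
          apply hr
          intro i j hij
          have : (Pi.single (r i) (1 : K) : Fin n → K) = Pi.single (r j) 1 := by rw [hij]
          exact h this
    have heq : ιMulti K p v = ∑ r : Fin p → Fin n, (ιMulti K p).toMultilinearMap
        (fun i => v i (r i) • (Pi.single (r i) (1 : K) : Fin n → K)) := by
      calc ιMulti K p v
          = (ιMulti K p).toMultilinearMap
              (fun i => ∑ j : Fin n, v i j • (Pi.single j (1 : K) : Fin n → K)) := by
            rw [← funext hv]; rfl
        _ = _ := MultilinearMap.map_sum _ _
    rw [heq]
    apply Submodule.sum_mem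
    intro r _
    rw [MultilinearMap.map_smul_univ]
    exact Submodule.smul_mem _ _ (base r)
  rw [Submodule.mem_span_range_iff_exists_fun] at hsp
  obtain ⟨c, hc⟩ := hsp
  refine ⟨fun I => if h : I ∈ powersetCard p (univ : Finset (Fin n)) then c ⟨I, h⟩ else 0, ?_⟩
  rw [← hc, ← Finset.sum_attach (powersetCard p (univ : Finset (Fin n)))
    (fun I => (if h : I ∈ powersetCard p (univ : Finset (Fin n)) then c ⟨I, h⟩ else 0) • eWedge K n I)]
  refine Finset.sum_congr rfl fun I _ => ?_
  rw [dif_pos I.2]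

open Finset ExteriorAlgebra MvPolynomial in
private lemma exists_coeff_poly {K : Type*} [Field K] {n p : ℕ}
    (f₁ f₂ : (Fin n → K) →ₗ[K] (Fin n → K))
    (ω : ExteriorAlgebra K (Fin n → K)) (hω : ω ∈ ⋀[K]^p (Fin n → K)) :
    ∃ c : Finset (Fin n) → MvPolynomial (Fin 2) K,
      ∀ x : Fin 2 → K,
        ExteriorAlgebra.map (x 0 • f₁ + x 1 • f₂) ω =
          ∑ I ∈ powersetCard p (univ : Finset (Fin n)),
            MvPolynomial.eval x (c I) • eWedge K n I := by
  classical
  rw [← ιMulti_span_fixedDegree] at hω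
  induction hω using Submodule.span_induction with
  | mem y hy =>
    obtain ⟨v, rfl⟩ := hy
    -- fixed vectors
    set u : Fin p → Fin n → K := fun i => f₁ (v i) with hu
    set w : Fin p → Fin n → K := fun i => f₂ (v i) with hwdef
    -- decompose each piecewise wedge
    have hz : ∀ s : Finset (Fin p), ∃ d : Finset (Fin n) → K,
        ιMulti K p (s.piecewise u w) =
          ∑ I ∈ powersetCard p (univ : Finset (Fin n)), d I • eWedge K n I := by
      intro s
      exact mem_span_eWedge _ (ιMulti_range K p (Set.mem_range_self _))
    choose d hd using hz
    refine ⟨fun I => ∑ s : Finset (Fin p),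
      MvPolynomial.C (d s I) * (X 0) ^ s.card * (X 1) ^ (p - s.card), fun x => ?_⟩
    have hmap : ExteriorAlgebra.map (x 0 • f₁ + x 1 • f₂) (ιMulti K p v) =
        ιMulti K p (fun i => x 0 • u i + x 1 • w i) := by
      rw [map_apply_ιMulti]
      congr 1
    rw [hmap]
    have hadd : (fun i => x 0 • u i + x 1 • w i) =
        (fun i => x 0 • u i) + (fun i => x 1 • w i) := rfl
    have hexp : ιMulti K p (fun i => x 0 • u i + x 1 • w i) =
        ∑ s : Finset (Fin p), (x 0 ^ s.card * x 1 ^ (p - s.card)) •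
          ιMulti K p (s.piecewise u w) := by
      rw [hadd]
      rw [show (ιMulti K p) ((fun i => x 0 • u i) + fun i => x 1 • w i) =
        (ιMulti K p).toMultilinearMap ((fun i => x 0 • u i) + fun i => x 1 • w i) from rfl,
        MultilinearMap.map_add_univ]
      refine Finset.sum_congr rfl fun s _ => ?_
      have hpw : s.piecewise (fun i => x 0 • u i) (fun i => x 1 • w i) =
          fun i => (if i ∈ s then x 0 else x 1) • s.piecewise u w i := by
        funext i
        by_cases h : i ∈ s <;> simp [Finset.piecewise, h]
      rw [hpw, MultilinearMap.map_smul_univ]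
      congr 1
      rw [Finset.prod_ite]
      simp only [Finset.prod_const]
      congr 1
      · congr 1
        rw [Finset.filter_mem_eq_inter, Finset.univ_inter]
      · congr 1
        rw [Finset.filter_not, Finset.filter_mem_eq_inter, Finset.univ_inter,
          Finset.card_sdiff_of_subset (Finset.subset_univ s), Finset.card_univ, Fintype.card_fin]
    rw [hexp]
    calc ∑ s : Finset (Fin p), (x 0 ^ s.card * x 1 ^ (p - s.card)) • ιMulti K p (s.piecewise u w)
        = ∑ s : Finset (Fin p), ∑ I ∈ powersetCard p (univ : Finset (Fin n)),
            (x 0 ^ s.card * x 1 ^ (p - s.card) * d s I) • eWedge K n I := by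
          refine Finset.sum_congr rfl fun s _ => ?_
          rw [hd s, Finset.smul_sum]
          refine Finset.sum_congr rfl fun I _ => ?_
          rw [smul_smul]
      _ = ∑ I ∈ powersetCard p (univ : Finset (Fin n)), ∑ s : Finset (Fin p),
            (x 0 ^ s.card * x 1 ^ (p - s.card) * d s I) • eWedge K n I := Finset.sum_comm
      _ = _ := by
          refine Finset.sum_congr rfl fun I _ => ?_
          rw [← Finset.sum_smul]
          congr 1
          rw [map_sum]
          refine Finset.sum_congr rfl fun s _ => ?_
          simp only [map_mul, map_pow, eval_C, eval_X]
          ring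
  | zero => exact ⟨0, by simp⟩
  | add y z hy hz ihy ihz =>
    obtain ⟨c₁, hc₁⟩ := ihy
    obtain ⟨c₂, hc₂⟩ := ihz
    refine ⟨c₁ + c₂, fun x => ?_⟩
    simp only [map_add, hc₁ x, hc₂ x, Pi.add_apply, add_smul, Finset.sum_add_distrib]
  | smul a y hy ihy =>
    obtain ⟨c, hc⟩ := ihy
    refine ⟨fun I => MvPolynomial.C a * c I, fun x => ?_⟩
    simp only [map_smul, hc x, Finset.smul_sum, map_mul, eval_C, mul_smul]

open Finset MvPolynomial in
/-- Let `K` be an infinite field, `ω ∈ ⋀^p K^n`, and let `F₁, F₂` be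
polynomial functions on `⋀^p K^n` (given on coordinates by polynomials `P₁, P₂`). If there
are `g₁, g₂ ∈ GL_n(K)` with `F₁((⋀^p g₁)(ω)) ≠ 0` and `F₂((⋀^p g₂)(ω)) ≠ 0`, then there are
scalars `λ, μ` such that `g = λ·g₁ + μ·g₂` is invertible and simultaneously
`F₁((⋀^p g)(ω)) ≠ 0` and `F₂((⋀^p g)(ω)) ≠ 0`. -/
theorem exists_combination_both_nonzero (K : Type*) [Field K] [Infinite K]
    (n p : ℕ) (hn : 1 ≤ n) (hp : 1 ≤ p)
    (ω : ExteriorAlgebra K (Fin n → K)) (hω : ω ∈ ⋀[K]^p (Fin n → K))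
    (F₁ F₂ : ExteriorAlgebra K (Fin n → K) → K)
    (P₁ P₂ : MvPolynomial (Finset (Fin n)) K)
    (hF₁ : ∀ c : Finset (Fin n) → K,
      F₁ (∑ I ∈ Finset.powersetCard p (Finset.univ : Finset (Fin n)), c I • eWedge K n I) =
        MvPolynomial.eval c P₁)
    (hF₂ : ∀ c : Finset (Fin n) → K,
      F₂ (∑ I ∈ Finset.powersetCard p (Finset.univ : Finset (Fin n)), c I • eWedge K n I) =
        MvPolynomial.eval c P₂)
    (g₁ g₂ : (Fin n → K) ≃ₗ[K] (Fin n → K))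
    (h₁ : F₁ (ExteriorAlgebra.map (g₁ : (Fin n → K) →ₗ[K] (Fin n → K)) ω) ≠ 0)
    (h₂ : F₂ (ExteriorAlgebra.map (g₂ : (Fin n → K) →ₗ[K] (Fin n → K)) ω) ≠ 0) :
    ∃ lam mu : K,
      Function.Bijective
        (lam • (g₁ : (Fin n → K) →ₗ[K] (Fin n → K)) +
          mu • (g₂ : (Fin n → K) →ₗ[K] (Fin n → K))) ∧
      F₁ (ExteriorAlgebra.map
        (lam • (g₁ : (Fin n → K) →ₗ[K] (Fin n → K)) +
          mu • (g₂ : (Fin n → K) →ₗ[K] (Fin n → K))) ω) ≠ 0 ∧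
      F₂ (ExteriorAlgebra.map
        (lam • (g₁ : (Fin n → K) →ₗ[K] (Fin n → K)) +
          mu • (g₂ : (Fin n → K) →ₗ[K] (Fin n → K))) ω) ≠ 0 := by
  classical
  obtain ⟨c, hc⟩ := exists_coeff_poly
    (g₁ : (Fin n → K) →ₗ[K] (Fin n → K)) (g₂ : (Fin n → K) →ₗ[K] (Fin n → K)) ω hω
  set A := LinearMap.toMatrix' (g₁ : (Fin n → K) →ₗ[K] (Fin n → K)) with hA
  set B := LinearMap.toMatrix' (g₂ : (Fin n → K) →ₗ[K] (Fin n → K)) with hB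
  set Dp : MvPolynomial (Fin 2) K :=
    Matrix.det (Matrix.of fun i j => C (A i j) * X 0 + C (B i j) * X 1) with hDp
  have hD : ∀ x : Fin 2 → K, eval x Dp =
      (LinearMap.toMatrix' (x 0 • (g₁ : (Fin n → K) →ₗ[K] (Fin n → K)) +
        x 1 • (g₂ : (Fin n → K) →ₗ[K] (Fin n → K)))).det := by
    intro x
    rw [hDp, RingHom.map_det]
    congr 1
    ext i j
    simp only [RingHom.mapMatrix_apply, Matrix.map_apply, Matrix.of_apply, map_add, map_mul,
      eval_C, eval_X, map_add, map_smul, Matrix.add_apply, Matrix.smul_apply, smul_eq_mul]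
    ring
  have hbij : ∀ x : Fin 2 → K, eval x Dp ≠ 0 →
      Function.Bijective (x 0 • (g₁ : (Fin n → K) →ₗ[K] (Fin n → K)) +
        x 1 • (g₂ : (Fin n → K) →ₗ[K] (Fin n → K))) := by
    intro x hx
    rw [hD x] at hx
    set M := LinearMap.toMatrix' (x 0 • (g₁ : (Fin n → K) →ₗ[K] (Fin n → K)) +
      x 1 • (g₂ : (Fin n → K) →ₗ[K] (Fin n → K))) with hM
    have hinv : Invertible M := M.invertibleOfIsUnitDet (isUnit_iff_ne_zero.2 hx)
    have h2 := Matrix.toLinearEquiv'_apply M hinv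
    have h3 : Matrix.toLin' M = (x 0 • (g₁ : (Fin n → K) →ₗ[K] (Fin n → K)) +
        x 1 • (g₂ : (Fin n → K) →ₗ[K] (Fin n → K))) := Matrix.toLin'_toMatrix' _
    rw [← h3, ← h2]
    exact (M.toLinearEquiv' hinv).bijective
  set Q₁ := MvPolynomial.bind₁ c P₁ with hQ₁def
  set Q₂ := MvPolynomial.bind₁ c P₂ with hQ₂def
  have hbind : ∀ (x : Fin 2 → K) (P : MvPolynomial (Finset (Fin n)) K),
      eval x (MvPolynomial.bind₁ c P) = eval (fun I => eval x (c I)) P := by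
    intro x P
    rw [show (eval x : MvPolynomial (Fin 2) K →+* K) = eval₂Hom (RingHom.id K) x from rfl,
      eval₂Hom_bind₁]
    rfl
  have hQ₁ : ∀ x : Fin 2 → K, eval x Q₁ =
      F₁ (ExteriorAlgebra.map (x 0 • (g₁ : (Fin n → K) →ₗ[K] (Fin n → K)) +
        x 1 • (g₂ : (Fin n → K) →ₗ[K] (Fin n → K))) ω) := by
    intro x
    rw [hc x, hF₁ (fun I => eval x (c I)), hQ₁def, hbind]
  have hQ₂ : ∀ x : Fin 2 → K, eval x Q₂ =
      F₂ (ExteriorAlgebra.map (x 0 • (g₁ : (Fin n → K) →ₗ[K] (Fin n → K)) +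
        x 1 • (g₂ : (Fin n → K) →ₗ[K] (Fin n → K))) ω) := by
    intro x
    rw [hc x, hF₂ (fun I => eval x (c I)), hQ₂def, hbind]
  have e1 : ((![1,0] : Fin 2 → K) 0) • (g₁ : (Fin n → K) →ₗ[K] (Fin n → K)) +
      ((![1,0] : Fin 2 → K) 1) • (g₂ : (Fin n → K) →ₗ[K] (Fin n → K)) =
      (g₁ : (Fin n → K) →ₗ[K] (Fin n → K)) := by
    simp [Matrix.cons_val_zero, Matrix.cons_val_one]
  have e2 : ((![0,1] : Fin 2 → K) 0) • (g₁ : (Fin n → K) →ₗ[K] (Fin n → K)) +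
      ((![0,1] : Fin 2 → K) 1) • (g₂ : (Fin n → K) →ₗ[K] (Fin n → K)) =
      (g₂ : (Fin n → K) →ₗ[K] (Fin n → K)) := by
    simp [Matrix.cons_val_zero, Matrix.cons_val_one]
  have hQ₁0 : Q₁ ≠ 0 := by
    intro h
    apply h₁
    rw [← e1, ← hQ₁ ![1,0], h, map_zero]
  have hQ₂0 : Q₂ ≠ 0 := by
    intro h
    apply h₂
    rw [← e2, ← hQ₂ ![0,1], h, map_zero]
  have hD0 : Dp ≠ 0 := by
    intro h
    have := hD ![1,0]
    rw [h, map_zero, e1] at this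
    have hu : IsUnit (LinearMap.det (g₁ : (Fin n → K) →ₗ[K] (Fin n → K))) :=
      LinearEquiv.isUnit_det' g₁
    rw [← LinearMap.det_toMatrix' (g₁ : (Fin n → K) →ₗ[K] (Fin n → K))] at hu
    rw [← this] at hu
    exact isUnit_iff_ne_zero.1 hu rfl
  have hprod : Dp * Q₁ * Q₂ ≠ 0 := mul_ne_zero (mul_ne_zero hD0 hQ₁0) hQ₂0
  have hex : ∃ x : Fin 2 → K, eval x (Dp * Q₁ * Q₂) ≠ 0 := by
    by_contra h
    push_neg at h
    exact hprod (MvPolynomial.funext fun x => by rw [h x, map_zero])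
  obtain ⟨x, hx⟩ := hex
  rw [map_mul, map_mul] at hx
  have hxD : eval x Dp ≠ 0 := fun h => hx (by rw [h, zero_mul, zero_mul])
  have hxQ₁ : eval x Q₁ ≠ 0 := fun h => hx (by rw [h, mul_zero, zero_mul])
  have hxQ₂ : eval x Q₂ ≠ 0 := fun h => hx (by rw [h, mul_zero])
  exact ⟨x 0, x 1, hbij x hxD, by rw [← hQ₁ x]; exact hxQ₁, by rw [← hQ₂ x]; exact hxQ₂⟩
end

section
/- Let K be a field of characteristic 0, let V be a finite-dimensional K-vector space, let v ∈ ⋀² V, and let l ≥ 0. Then v^{∧(l+1)} = 0 in ⋀^{2(l+1)} V if and only if there exist vectors u₁,…,u_l, w₁,…,w_l ∈ V with v = u₁∧w₁ + ⋯ + u_l∧w_l. That is, a bivector has nilpotency degree at most l+1 exactly when it has rank at most l, so the rank filtration on ⋀²V coincides with the filtration by Pfaffian varieties. -/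
open ExteriorAlgebra

section helpers

variable {K V : Type*} [Field K] [AddCommGroup V] [Module K V]

lemma swap_ι (x y : V) : ι K x * ι K y = -(ι K y * ι K x) :=
  eq_neg_of_add_eq_zero_left (ι_add_mul_swap x y)

lemma comm_biv_ι (x y m : V) : Commute (ι K x * ι K y) (ι K m) := by
  show _ = _
  rw [mul_assoc, swap_ι y m, mul_neg, ← mul_assoc, swap_ι x m, neg_mul, neg_neg, mul_assoc]

lemma comm_biv_biv (x y c d : V) : Commute (ι K x * ι K y) (ι K c * ι K d) :=
  (comm_biv_ι x y c).mul_right (comm_biv_ι x y d)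

lemma biv_sq (x y : V) : (ι K x * ι K y) * (ι K x * ι K y) = 0 := by
  rw [mul_assoc, ← mul_assoc (ι K y), swap_ι y x, neg_mul, mul_neg, ← mul_assoc,
    ← mul_assoc (ι K x) (ι K x), ι_sq_zero, zero_mul, zero_mul, neg_zero]

lemma contract_biv_mul (d : Module.Dual K V) (x y : V) (z : ExteriorAlgebra K V) :
    CliffordAlgebra.contractLeft d (ι K x * ι K y * z)
      = (d x • ι K y - d y • ι K x) * z + (ι K x * ι K y) * CliffordAlgebra.contractLeft d z := by
  rw [mul_assoc, CliffordAlgebra.contractLeft_ι_mul, CliffordAlgebra.contractLeft_ι_mul]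
  simp only [mul_sub, sub_mul, smul_mul_assoc, mul_smul_comm, mul_assoc]
  abel

variable {N : ℕ}

lemma comm_ι_sum (a b : Fin N → V) (m : V) :
    Commute (∑ i, ι K (a i) * ι K (b i)) (ι K m) :=
  Commute.sum_left _ _ _ (fun i _ => comm_biv_ι (a i) (b i) m)

lemma comm_sum_biv (a b : Fin N → V) (x y : V) :
    Commute (∑ i, ι K (a i) * ι K (b i)) (ι K x * ι K y) :=
  Commute.sum_left _ _ _ (fun i _ => comm_biv_biv (a i) (b i) x y)

lemma ι_xd (d : Module.Dual K V) (a b : Fin N → V) :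
    ι K (∑ i, (d (a i) • b i - d (b i) • a i))
      = ∑ i, (d (a i) • ι K (b i) - d (b i) • ι K (a i)) := by
  rw [map_sum]; simp only [map_sub, map_smul]

lemma contract_sum_mul (d : Module.Dual K V) (a b : Fin N → V) (z : ExteriorAlgebra K V) :
    CliffordAlgebra.contractLeft d ((∑ i, ι K (a i) * ι K (b i)) * z)
      = ι K (∑ i, (d (a i) • b i - d (b i) • a i)) * z
        + (∑ i, ι K (a i) * ι K (b i)) * CliffordAlgebra.contractLeft d z := by
  rw [ι_xd, Finset.sum_mul, map_sum, Finset.sum_mul, Finset.sum_mul, ← Finset.sum_add_distrib]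
  exact Finset.sum_congr rfl fun i _ => contract_biv_mul d (a i) (b i) z

lemma contract_pow (d : Module.Dual K V) (a b : Fin N → V) (k : ℕ) :
    CliffordAlgebra.contractLeft d ((∑ i, ι K (a i) * ι K (b i)) ^ (k + 1))
      = (k + 1) • (ι K (∑ i, (d (a i) • b i - d (b i) • a i))
          * (∑ i, ι K (a i) * ι K (b i)) ^ k) := by
  induction k with
  | zero =>
    simp only [zero_add, pow_one, pow_zero, mul_one, one_smul]
    have := contract_sum_mul d a b (1 : ExteriorAlgebra K V)
    rwa [mul_one, CliffordAlgebra.contractLeft_one, mul_zero, add_zero, mul_one] at this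
  | succ k IH =>
    rw [pow_succ' _ (k + 1), contract_sum_mul, IH, mul_smul_comm,
      ← mul_assoc, (comm_ι_sum a b _).eq, mul_assoc, ← pow_succ']
    exact (succ_nsmul' _ _).symm

lemma degenerate_zero [CharZero K] [FiniteDimensional K V] (a b : Fin N → V)
    (h : ∀ φ ψ : Module.Dual K V, ψ (∑ i, (φ (a i) • b i - φ (b i) • a i)) = 0) :
    (∑ i, ι K (a i) * ι K (b i)) = 0 := by
  set e := Module.finBasis K V with he
  set A : Fin N → Fin (Module.finrank K V) → K := fun i p => e.repr (a i) p with hA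
  set B : Fin N → Fin (Module.finrank K V) → K := fun i p => e.repr (b i) p with hB
  set M : Fin (Module.finrank K V) → Fin (Module.finrank K V) → K :=
    fun p q => ∑ i, A i p * B i q with hM
  have hMsymm : ∀ p q, M p q = M q p := by
    intro p q
    have h1 := h (e.coord p) (e.coord q)
    simp only [map_sum, map_sub, map_smul, Module.Basis.coord_apply, smul_eq_mul,
      Finset.sum_sub_distrib, sub_eq_zero] at h1
    simp only [hM, hA, hB]
    rw [h1]
    exact Finset.sum_congr rfl fun i _ => mul_comm _ _
  have hv : (∑ i, ι K (a i) * ι K (b i))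
      = ∑ p, ∑ q, M p q • (ι K (e p) * ι K (e q)) := by
    have ha : ∀ i, ι K (a i) = ∑ p, A i p • ι K (e p) := by
      intro i
      conv_lhs => rw [← e.sum_repr (a i)]
      rw [map_sum]; simp only [map_smul, hA]
    have hb : ∀ i, ι K (b i) = ∑ p, B i p • ι K (e p) := by
      intro i
      conv_lhs => rw [← e.sum_repr (b i)]
      rw [map_sum]; simp only [map_smul, hB]
    calc (∑ i, ι K (a i) * ι K (b i))
        = ∑ i, ∑ p, ∑ q, (A i p * B i q) • (ι K (e p) * ι K (e q)) := by
          refine Finset.sum_congr rfl fun i _ => ?_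
          rw [ha i, hb i, Finset.sum_mul]
          refine Finset.sum_congr rfl fun p _ => ?_
          rw [Finset.mul_sum]
          refine Finset.sum_congr rfl fun q _ => ?_
          rw [smul_mul_smul_comm]
      _ = ∑ p, ∑ q, ∑ i, (A i p * B i q) • (ι K (e p) * ι K (e q)) := by
          rw [Finset.sum_comm]
          exact Finset.sum_congr rfl fun p _ => Finset.sum_comm
      _ = ∑ p, ∑ q, M p q • (ι K (e p) * ι K (e q)) := by
          refine Finset.sum_congr rfl fun p _ => Finset.sum_congr rfl fun q _ => ?_
          rw [hM, Finset.sum_smul]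
  have hneg : (∑ i, ι K (a i) * ι K (b i)) = -(∑ i, ι K (a i) * ι K (b i)) := by
    calc (∑ i, ι K (a i) * ι K (b i))
        = ∑ p, ∑ q, M p q • (ι K (e p) * ι K (e q)) := hv
      _ = ∑ p, ∑ q, M q p • (ι K (e q) * ι K (e p)) := Finset.sum_comm
      _ = ∑ p, ∑ q, M p q • -(ι K (e p) * ι K (e q)) := by
          refine Finset.sum_congr rfl fun p _ => Finset.sum_congr rfl fun q _ => ?_
          rw [hMsymm q p, swap_ι]
      _ = -(∑ p, ∑ q, M p q • (ι K (e p) * ι K (e q))) := by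
          simp only [smul_neg, Finset.sum_neg_distrib]
      _ = -(∑ i, ι K (a i) * ι K (b i)) := by rw [← hv]
  have h2 : (2 : K) • (∑ i, ι K (a i) * ι K (b i)) = 0 := by
    rw [two_smul]
    nth_rewrite 1 [hneg]
    exact neg_add_cancel _
  exact (smul_eq_zero.mp h2).resolve_left two_ne_zero

lemma easy_dir : ∀ (l : ℕ) (u w : Fin l → V),
    (∑ i, ι K (u i) * ι K (w i)) ^ (l + 1) = 0 := by
  intro l
  induction l with
  | zero => intro u w; simp
  | succ l IH =>
    intro u w
    rw [Fin.sum_univ_castSucc]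
    set s := ∑ i : Fin l, ι K (u i.castSucc) * ι K (w i.castSucc) with hs
    set t := ι K (u (Fin.last l)) * ι K (w (Fin.last l)) with ht
    have hc : Commute s t :=
      Commute.sum_left _ _ _ fun i _ => comm_biv_biv _ _ _ _
    rw [hc.add_pow]
    refine Finset.sum_eq_zero fun m hm => ?_
    rcases le_or_gt m l with hml | hml
    · have h2 : l + 1 + 1 - m = 2 + (l - m) := by omega
      rw [h2, pow_add, pow_two, ht, biv_sq, zero_mul, mul_zero, zero_mul]
    · have h2 : m = (l + 1) + (m - (l + 1)) := by omega
      rw [h2, pow_add, IH (fun i => u i.castSucc) (fun i => w i.castSucc), zero_mul,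
        zero_mul, zero_mul]

lemma exists_rep (v : ExteriorAlgebra K V) (hv : v ∈ ⋀[K]^2 V) :
    ∃ (N : ℕ) (a b : Fin N → V), v = ∑ i, ι K (a i) * ι K (b i) := by
  have h2 : v ∈ LinearMap.range (ι K : V →ₗ[K] ExteriorAlgebra K V)
      * LinearMap.range (ι K : V →ₗ[K] ExteriorAlgebra K V) := by
    rw [← pow_two]; exact hv
  refine Submodule.mul_induction_on h2 ?_ ?_
  · rintro m ⟨x, rfl⟩ n ⟨y, rfl⟩
    exact ⟨1, fun _ => x, fun _ => y, by simp⟩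
  · rintro z1 z2 ⟨N1, a1, b1, rfl⟩ ⟨N2, a2, b2, rfl⟩
    refine ⟨N1 + N2, Fin.append a1 a2, Fin.append b1 b2, ?_⟩
    rw [Fin.sum_univ_add]
    simp [Fin.append_left, Fin.append_right]

lemma hard_dir [CharZero K] [FiniteDimensional K V] :
    ∀ (l N : ℕ) (a b : Fin N → V),
      (∑ i, ι K (a i) * ι K (b i)) ^ (l + 1) = 0 →
      ∃ u w : Fin l → V,
        (∑ i, ι K (a i) * ι K (b i)) = ∑ i, ι K (u i) * ι K (w i) := by
  intro l
  induction l with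
  | zero =>
    intro N a b h
    rw [pow_one] at h
    exact ⟨Fin.elim0, Fin.elim0, by simpa using h⟩
  | succ l IH =>
    intro N a b h
    by_cases hv0 : (∑ i, ι K (a i) * ι K (b i)) = 0
    · exact ⟨fun _ => 0, fun _ => 0, by simp [hv0]⟩
    by_cases hex : ∃ φ ψ : Module.Dual K V, ψ (∑ i, (φ (a i) • b i - φ (b i) • a i)) ≠ 0
    swap
    · push_neg at hex
      exact absurd (degenerate_zero a b hex) hv0
    obtain ⟨φ, ψ₀, hψ₀⟩ := hex
    set w : V := ∑ i, (φ (a i) • b i - φ (b i) • a i) with hw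
    set ψ : Module.Dual K V := (ψ₀ w)⁻¹ • ψ₀ with hψdef
    have hψw : ψ w = 1 := by
      rw [hψdef]
      simp only [LinearMap.smul_apply, smul_eq_mul]
      exact inv_mul_cancel₀ hψ₀
    set x : V := ∑ i, (ψ (a i) • b i - ψ (b i) • a i) with hx
    -- Step 1: ι w * v^(l+1) = 0
    have h4 : ι K w * (∑ i, ι K (a i) * ι K (b i)) ^ (l + 1) = 0 := by
      have hc := contract_pow φ a b (l + 1)
      rw [h, map_zero] at hc
      have h2 : ((l + 2 : ℕ) : K) • (ι K w * (∑ i, ι K (a i) * ι K (b i)) ^ (l + 1)) = 0 := by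
        rw [Nat.cast_smul_eq_nsmul]
        exact_mod_cast hc.symm
      have h3 : ((l + 2 : ℕ) : K) ≠ 0 := Nat.cast_ne_zero.mpr (by omega)
      exact (smul_eq_zero.mp h2).resolve_left h3
    -- Step 2: v^(l+1) = (l+1) • (ι w * ι x * v^l)
    have h5 : (∑ i, ι K (a i) * ι K (b i)) ^ (l + 1)
        = (l + 1) • (ι K w * ι K x * (∑ i, ι K (a i) * ι K (b i)) ^ l) := by
      have hc := congrArg (CliffordAlgebra.contractLeft ψ) h4
      rw [map_zero, CliffordAlgebra.contractLeft_ι_mul, contract_pow ψ a b l, hψw,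
        one_smul, ← hx] at hc
      rw [sub_eq_zero] at hc
      rw [hc, mul_smul_comm, mul_assoc]
    -- new family: v - ι w * ι x
    set a' : Fin (N + 1) → V := Fin.snoc a (-w) with ha'
    set b' : Fin (N + 1) → V := Fin.snoc b x with hb'
    have hvu : (∑ i, ι K (a' i) * ι K (b' i))
        = (∑ i, ι K (a i) * ι K (b i)) - ι K w * ι K x := by
      rw [Fin.sum_univ_castSucc]
      simp only [ha', hb', Fin.snoc_castSucc, Fin.snoc_last, map_neg, neg_mul, sub_eq_add_neg]
    have hpow : ((∑ i, ι K (a i) * ι K (b i)) - ι K w * ι K x) ^ (l + 1) = 0 := by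
      set v := ∑ i, ι K (a i) * ι K (b i) with hv
      set u0 := ι K w * ι K x with hu0
      have hcm : Commute v (-u0) := (comm_sum_biv a b w x).neg_right
      rw [sub_eq_add_neg, hcm.add_pow]
      rw [Finset.sum_range_succ, Finset.sum_range_succ]
      have hz : ∑ m ∈ Finset.range l, v ^ m * (-u0) ^ (l + 1 - m) * ↑((l + 1).choose m) = 0 := by
        refine Finset.sum_eq_zero fun m hm => ?_
        rw [Finset.mem_range] at hm
        have h2 : l + 1 - m = 2 + (l - 1 - m) := by omega
        have hu2 : (-u0) ^ 2 = 0 := by rw [neg_sq, sq, hu0, biv_sq]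
        rw [h2, pow_add, hu2, zero_mul, mul_zero, zero_mul]
      rw [hz, zero_add]
      rw [Nat.choose_succ_self_right, Nat.choose_self, Nat.sub_self, pow_zero, mul_one,
        Nat.cast_one, mul_one, Nat.add_sub_cancel_left, pow_one]
      rw [h5]
      have hcomm : u0 * v ^ l = v ^ l * u0 := ((comm_sum_biv a b w x).symm.pow_right l).eq
      rw [hcomm, nsmul_eq_mul, mul_neg, neg_mul, (Nat.cast_commute (l + 1) (v ^ l * u0)).eq]
      exact neg_add_cancel _
    obtain ⟨u, w', hrep⟩ := IH (N + 1) a' b' (by rw [hvu]; exact hpow)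
    refine ⟨Fin.snoc u w, Fin.snoc w' x, ?_⟩
    rw [Fin.sum_univ_castSucc]
    simp only [Fin.snoc_castSucc, Fin.snoc_last]
    rw [← hrep, hvu, sub_add_cancel]

end helpers

/-- A bivector `v ∈ ⋀² V` over a finite-dimensional space in
characteristic zero satisfies `v^{∧(l+1)} = 0` iff `v` has rank at most `l`, i.e. iff
`v = u₁∧w₁ + ⋯ + u_l∧w_l` for some vectors `u_i, w_i ∈ V`. -/
theorem bivector_pow_eq_zero_iff_rank_le (K V : Type*) [Field K] [CharZero K]
    [AddCommGroup V] [Module K V] [FiniteDimensional K V]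
    (l : ℕ) (v : ExteriorAlgebra K V) (hv : v ∈ ⋀[K]^2 V) :
    v ^ (l + 1) = 0 ↔
      ∃ u w : Fin l → V,
        v = ∑ i, ExteriorAlgebra.ι K (u i) * ExteriorAlgebra.ι K (w i) := by
  constructor
  · intro h
    obtain ⟨N, a, b, rfl⟩ := exists_rep v hv
    exact hard_dir l N a b h
  · rintro ⟨u, w, rfl⟩
    exact easy_dir l u w
end

section
/- Let K be a field and let e₁,…,e₇ be the standard basis of K⁷. The trivector e₁∧e₂∧e₃ + e₄∧e₅∧e₆ ∈ ⋀³ K⁷ cannot be written in the form β ∧ v for any bivector β ∈ ⋀² K⁷ and any vector v ∈ K⁷. In particular, it is not of the form (ν₁ + ν₂) ∧ v with ν₁, ν₂ decomposable bivectors. -/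
set_option maxHeartbeats 1600000


/-- The standard basis vector `e_i` of `K⁷` inside the exterior algebra. -/
noncomputable def e7 (K : Type*) [Field K] (i : Fin 7) : ExteriorAlgebra K (Fin 7 → K) :=
  ExteriorAlgebra.ι K (Pi.single i 1)

section Aux

open ExteriorAlgebra

variable (K : Type*) [Field K]

/-- The alternating map picking out the minor on the columns `S`. -/
noncomputable def trivAuxDfun (n : ℕ) (S : Fin n → Fin 7) : (Fin 7 → K) [⋀^Fin n]→ₗ[K] K :=
  (Matrix.detRowAlternating).compLinearMap (LinearMap.funLeft K K S)

/-- The induced linear functional on the exterior algebra, supported in degree `n`. -/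
noncomputable def trivAuxPhi (n : ℕ) (S : Fin n → Fin 7) :
    ExteriorAlgebra K (Fin 7 → K) →ₗ[K] K :=
  ExteriorAlgebra.liftAlternating (Pi.single n (trivAuxDfun K n S))

lemma trivAux_prod4 (a b c d : Fin 7 → K) :
    ι K a * ι K b * ι K c * ι K d = ιMulti K 4 ![a, b, c, d] := by
  simp [ExteriorAlgebra.ιMulti_apply, List.ofFn_succ, mul_assoc]

lemma trivAux_prod3 (a b c : Fin 7 → K) :
    ι K a * ι K b * ι K c = ιMulti K 3 ![a, b, c] := by
  simp [ExteriorAlgebra.ιMulti_apply, List.ofFn_succ, mul_assoc]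

lemma trivAuxPhi4_apply (S : Fin 4 → Fin 7) (w : Fin 4 → Fin 7 → K) :
    trivAuxPhi K 4 S (ιMulti K 4 w) = Matrix.det (Matrix.of fun i j => w i (S j)) := by
  rw [trivAuxPhi, ExteriorAlgebra.liftAlternating_apply_ιMulti, Pi.single_eq_same]
  rfl

lemma trivAuxPhi3_apply (S : Fin 3 → Fin 7) (w : Fin 3 → Fin 7 → K) :
    trivAuxPhi K 3 S (ιMulti K 3 w) = Matrix.det (Matrix.of fun i j => w i (S j)) := by
  rw [trivAuxPhi, ExteriorAlgebra.liftAlternating_apply_ιMulti, Pi.single_eq_same]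
  rfl

lemma trivAux_key (β : ExteriorAlgebra K (Fin 7 → K)) (v : Fin 7 → K) :
    e7 K 0 * e7 K 1 * e7 K 2 + e7 K 3 * e7 K 4 * e7 K 5 ≠ β * ι K v := by
  intro h
  have hz : (e7 K 0 * e7 K 1 * e7 K 2 + e7 K 3 * e7 K 4 * e7 K 5) * ι K v = 0 := by
    rw [h, mul_assoc, ι_sq_zero, mul_zero]
  rw [add_mul] at hz
  simp only [e7, trivAux_prod4] at hz
  have hv : v = 0 := by
    funext i
    fin_cases i
    · have h4 := congrArg (trivAuxPhi K 4 ![3, 4, 5, 0]) hz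
      rw [map_add, map_zero, trivAuxPhi4_apply, trivAuxPhi4_apply] at h4
      simpa [Matrix.det_succ_row_zero, Fin.sum_univ_succ, Pi.single_apply] using h4
    · have h4 := congrArg (trivAuxPhi K 4 ![3, 4, 5, 1]) hz
      rw [map_add, map_zero, trivAuxPhi4_apply, trivAuxPhi4_apply] at h4
      simpa [Matrix.det_succ_row_zero, Fin.sum_univ_succ, Pi.single_apply] using h4
    · have h4 := congrArg (trivAuxPhi K 4 ![3, 4, 5, 2]) hz
      rw [map_add, map_zero, trivAuxPhi4_apply, trivAuxPhi4_apply] at h4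
      simpa [Matrix.det_succ_row_zero, Fin.sum_univ_succ, Pi.single_apply] using h4
    · have h4 := congrArg (trivAuxPhi K 4 ![0, 1, 2, 3]) hz
      rw [map_add, map_zero, trivAuxPhi4_apply, trivAuxPhi4_apply] at h4
      simpa [Matrix.det_succ_row_zero, Fin.sum_univ_succ, Pi.single_apply] using h4
    · have h4 := congrArg (trivAuxPhi K 4 ![0, 1, 2, 4]) hz
      rw [map_add, map_zero, trivAuxPhi4_apply, trivAuxPhi4_apply] at h4
      simpa [Matrix.det_succ_row_zero, Fin.sum_univ_succ, Pi.single_apply] using h4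
    · have h4 := congrArg (trivAuxPhi K 4 ![0, 1, 2, 5]) hz
      rw [map_add, map_zero, trivAuxPhi4_apply, trivAuxPhi4_apply] at h4
      simpa [Matrix.det_succ_row_zero, Fin.sum_univ_succ, Pi.single_apply] using h4
    · have h4 := congrArg (trivAuxPhi K 4 ![0, 1, 2, 6]) hz
      rw [map_add, map_zero, trivAuxPhi4_apply, trivAuxPhi4_apply] at h4
      simpa [Matrix.det_succ_row_zero, Fin.sum_univ_succ, Pi.single_apply] using h4
  have h0 : e7 K 0 * e7 K 1 * e7 K 2 + e7 K 3 * e7 K 4 * e7 K 5 = 0 := by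
    rw [h, hv, map_zero, mul_zero]
  simp only [e7, trivAux_prod3] at h0
  have h3 := congrArg (trivAuxPhi K 3 ![0, 1, 2]) h0
  rw [map_add, map_zero, trivAuxPhi3_apply, trivAuxPhi3_apply] at h3
  simp [Matrix.det_succ_row_zero, Fin.sum_univ_succ, Pi.single_apply] at h3

end Aux

/-- The trivector `e₁∧e₂∧e₃ + e₄∧e₅∧e₆ ∈ ⋀³ K⁷` cannot be written in the
form `β ∧ v` for any bivector `β ∈ ⋀² K⁷` and any vector `v ∈ K⁷`. In particular, it is not
of the form `(ν₁ + ν₂) ∧ v` with `ν₁, ν₂` decomposable bivectors. -/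
theorem trivector_not_bivector_wedge_vector (K : Type*) [Field K] :
    (¬ ∃ (β : ExteriorAlgebra K (Fin 7 → K)) (v : Fin 7 → K),
      β ∈ ⋀[K]^2 (Fin 7 → K) ∧
      e7 K 0 * e7 K 1 * e7 K 2 + e7 K 3 * e7 K 4 * e7 K 5 = β * ExteriorAlgebra.ι K v) ∧
    (¬ ∃ u₁ w₁ u₂ w₂ v : Fin 7 → K,
      e7 K 0 * e7 K 1 * e7 K 2 + e7 K 3 * e7 K 4 * e7 K 5 =
        (ExteriorAlgebra.ι K u₁ * ExteriorAlgebra.ι K w₁ +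
          ExteriorAlgebra.ι K u₂ * ExteriorAlgebra.ι K w₂) * ExteriorAlgebra.ι K v) := by
  constructor
  · rintro ⟨β, v, -, h⟩
    exact trivAux_key K β v h
  · rintro ⟨u₁, w₁, u₂, w₂, v, h⟩
    exact trivAux_key K _ v h
end

section
/- Let K be a field of characteristic 0 and let e₁,…,e₇ be the standard basis of K⁷. The trivector ω = (e₁∧e₂ + e₃∧e₄ + e₅∧e₆) ∧ e₇ ∈ ⋀³ K⁷ cannot be written in the form (u₁∧u₂ + u₃∧u₄) ∧ w for any vectors u₁, u₂, u₃, u₄, w ∈ K⁷. -/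
open ExteriorAlgebra

section Aux

variable {K : Type*} [Field K]

private lemma iota_swap (p q : Fin 7 → K) : ι K p * ι K q = -(ι K q * ι K p) :=
  eq_neg_of_add_eq_zero_left (ExteriorAlgebra.ι_add_mul_swap p q)

private lemma iota_swap3 (p q : Fin 7 → K) (x : ExteriorAlgebra K (Fin 7 → K)) :
    ι K p * (ι K q * x) = -(ι K q * (ι K p * x)) := by
  rw [← mul_assoc, ← mul_assoc, iota_swap, neg_mul]

private lemma pair_sq (x y : Fin 7 → K) : (ι K x * ι K y) * (ι K x * ι K y) = 0 := by
  rw [mul_assoc, iota_swap3 y x (ι K y), ι_sq_zero, mul_zero, neg_zero, mul_zero]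

private lemma pair_comm (x y z t : Fin 7 → K) :
    (ι K x * ι K y) * (ι K z * ι K t) = (ι K z * ι K t) * (ι K x * ι K y) := by
  rw [mul_assoc, mul_assoc, iota_swap3 y z (ι K t), mul_neg,
    iota_swap3 x z (ι K y * ι K t), neg_neg, iota_swap y t, mul_neg, mul_neg,
    iota_swap3 x t (ι K y), mul_neg, neg_neg]

private lemma mul_pair_zero (a b : ExteriorAlgebra K (Fin 7 → K)) (ha : a * a = 0)
    (hb : b * b = 0) (hab : a * b = b * a) : (a + b) * (a * b) = 0 := by
  rw [add_mul, ← mul_assoc, ha, zero_mul, ← mul_assoc, ← hab, mul_assoc, hb, mul_zero, add_zero]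

private lemma cube_zero (a b : ExteriorAlgebra K (Fin 7 → K)) (ha : a * a = 0) (hb : b * b = 0)
    (hab : a * b = b * a) : (a + b) * ((a + b) * (a + b)) = 0 := by
  have h2 : (a + b) * (a + b) = a * b + a * b := by
    rw [mul_add, add_mul, add_mul, ha, hb, hab]; abel
  rw [h2, mul_add, mul_pair_zero a b ha hb hab, add_zero]

/-- Expansion of the cube of a sum of three square-zero commuting elements, times `d`. -/
private lemma triple_cube {R : Type*} [Ring R] (a b c d : R)
    (ha : a * a = 0) (hb : b * b = 0) (hc : c * c = 0)
    (hba : b * a = a * b) (hca : c * a = a * c) (hcb : c * b = b * c) :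
    (a + b + c) * ((a + b + c) * ((a + b + c) * d)) =
      a * (b * (c * d)) + a * (b * (c * d)) + a * (b * (c * d)) +
      a * (b * (c * d)) + a * (b * (c * d)) + a * (b * (c * d)) := by
  have ha' : ∀ x, a * (a * x) = 0 := fun x => by rw [← mul_assoc, ha, zero_mul]
  have hb' : ∀ x, b * (b * x) = 0 := fun x => by rw [← mul_assoc, hb, zero_mul]
  have hc' : ∀ x, c * (c * x) = 0 := fun x => by rw [← mul_assoc, hc, zero_mul]
  have hba' : ∀ x, b * (a * x) = a * (b * x) := fun x => by
    rw [← mul_assoc, hba, mul_assoc]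
  have hca' : ∀ x, c * (a * x) = a * (c * x) := fun x => by
    rw [← mul_assoc, hca, mul_assoc]
  have hcb' : ∀ x, c * (b * x) = b * (c * x) := fun x => by
    rw [← mul_assoc, hcb, mul_assoc]
  simp only [add_mul, mul_add, mul_assoc, ha', hb', hc', hba', hca', hcb',
    mul_zero, zero_mul, add_zero, zero_add]
  abel

noncomputable def fam4 (K : Type*) [Field K] (σ : Fin 4 → Fin 7) :
    ∀ m, (Fin 7 → K) [⋀^Fin m]→ₗ[K] K
  | 4 => Matrix.detRowAlternating.compLinearMap (LinearMap.funLeft K K σ)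
  | _ => 0

noncomputable def fam7 (K : Type*) [Field K] (σ : Fin 7 → Fin 7) :
    ∀ m, (Fin 7 → K) [⋀^Fin m]→ₗ[K] K
  | 7 => Matrix.detRowAlternating.compLinearMap (LinearMap.funLeft K K σ)
  | _ => 0

noncomputable def Fdeg4 (K : Type*) [Field K] (σ : Fin 4 → Fin 7) :
    ExteriorAlgebra K (Fin 7 → K) →ₗ[K] K :=
  ExteriorAlgebra.liftAlternating (fam4 K σ)

noncomputable def Fdeg7 (K : Type*) [Field K] (σ : Fin 7 → Fin 7) :
    ExteriorAlgebra K (Fin 7 → K) →ₗ[K] K :=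
  ExteriorAlgebra.liftAlternating (fam7 K σ)

theorem Fdeg4_apply (σ : Fin 4 → Fin 7) (a b c d : Fin 7 → K) :
    Fdeg4 K σ (ι K a * (ι K b * (ι K c * ι K d))) =
      Matrix.det (Matrix.of fun i j => ![a, b, c, d] i (σ j)) := by
  have h : ι K a * (ι K b * (ι K c * ι K d)) = ExteriorAlgebra.ιMulti K 4 ![a, b, c, d] := by
    simp [ExteriorAlgebra.ιMulti_apply, List.ofFn_succ, mul_assoc]
  rw [h, Fdeg4, ExteriorAlgebra.liftAlternating_apply_ιMulti]
  rw [show fam4 K σ 4 = Matrix.detRowAlternating.compLinearMap (LinearMap.funLeft K K σ) from rfl,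
    AlternatingMap.compLinearMap_apply]
  rfl

set_option maxRecDepth 4000 in
theorem Fdeg7_apply (σ : Fin 7 → Fin 7) (a b c d e f g : Fin 7 → K) :
    Fdeg7 K σ (ι K a * (ι K b * (ι K c * (ι K d * (ι K e * (ι K f * ι K g)))))) =
      Matrix.det (Matrix.of fun i j => ![a, b, c, d, e, f, g] i (σ j)) := by
  have h : ι K a * (ι K b * (ι K c * (ι K d * (ι K e * (ι K f * ι K g))))) =
      ExteriorAlgebra.ιMulti K 7 ![a, b, c, d, e, f, g] := by
    simp [ExteriorAlgebra.ιMulti_apply, List.ofFn_succ, mul_assoc]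
  rw [h, Fdeg7, ExteriorAlgebra.liftAlternating_apply_ιMulti]
  rw [show fam7 K σ 7 = Matrix.detRowAlternating.compLinearMap (LinearMap.funLeft K K σ) from rfl,
    AlternatingMap.compLinearMap_apply]
  congr 1

set_option maxRecDepth 2000 in
private lemma Ftop {K : Type*} [Field K] :
    Fdeg7 K (id : Fin 7 → Fin 7)
      (ι K (Pi.single 0 1) * (ι K (Pi.single 1 1) * (ι K (Pi.single 2 1) *
        (ι K (Pi.single 3 1) * (ι K (Pi.single 4 1) *
          (ι K (Pi.single 5 1) * ι K (Pi.single 6 1))))))) = 1 := by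
  have hdet : (Matrix.of fun i j =>
      ![(Pi.single 0 1 : Fin 7 → K), Pi.single 1 1, Pi.single 2 1, Pi.single 3 1,
        Pi.single 4 1, Pi.single 5 1, Pi.single 6 1] i ((id : Fin 7 → Fin 7) j)) = 1 := by
    ext i j
    fin_cases i <;> fin_cases j <;>
      simp [Pi.single_apply, Matrix.one_apply] <;> rfl
  rw [Fdeg7_apply, hdet, Matrix.det_one]

end Aux

set_option maxRecDepth 2000 in
set_option maxHeartbeats 2000000 in
/-- The trivector `ω = (e₁∧e₂ + e₃∧e₄ + e₅∧e₆) ∧ e₇ ∈ ⋀³ K⁷` cannot be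
written in the form `(u₁∧u₂ + u₃∧u₄) ∧ w` for any vectors `u₁, u₂, u₃, u₄, w ∈ K⁷`. -/
theorem rank_three_wedge_not_rank_two_wedge (K : Type*) [Field K] [CharZero K] :
    ¬ ∃ u₁ u₂ u₃ u₄ w : Fin 7 → K,
      (e7 K 0 * e7 K 1 + e7 K 2 * e7 K 3 + e7 K 4 * e7 K 5) * e7 K 6 =
        (ExteriorAlgebra.ι K u₁ * ExteriorAlgebra.ι K u₂ +
          ExteriorAlgebra.ι K u₃ * ExteriorAlgebra.ι K u₄) * ExteriorAlgebra.ι K w := by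
  rintro ⟨u₁, u₂, u₃, u₄, w, h⟩
  set β : ExteriorAlgebra K (Fin 7 → K) :=
    e7 K 0 * e7 K 1 + e7 K 2 * e7 K 3 + e7 K 4 * e7 K 5 with hβdef
  set η : ExteriorAlgebra K (Fin 7 → K) :=
    ι K u₁ * ι K u₂ + ι K u₃ * ι K u₄ with hηdef
  -- Step 1: (β * e₆) * ι w = 0
  have h1 : (β * e7 K 6) * ι K w = 0 := by
    rw [h, mul_assoc, ι_sq_zero, mul_zero]
  -- Expand into monomials
  have hexp1 : (β * e7 K 6) * ι K w =
      ι K (Pi.single 0 1) * (ι K (Pi.single 1 1) * (ι K (Pi.single 6 1) * ι K w)) +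
      ι K (Pi.single 2 1) * (ι K (Pi.single 3 1) * (ι K (Pi.single 6 1) * ι K w)) +
      ι K (Pi.single 4 1) * (ι K (Pi.single 5 1) * (ι K (Pi.single 6 1) * ι K w)) := by
    simp only [hβdef, e7, add_mul, mul_assoc]
  rw [hexp1] at h1
  -- Step 2: w i = 0 for i ≠ 6
  have hcoeff : ∀ σ : Fin 4 → Fin 7,
      Matrix.det (Matrix.of fun i j =>
        ![(Pi.single 0 1 : Fin 7 → K), Pi.single 1 1, Pi.single 6 1, w] i (σ j)) +
      Matrix.det (Matrix.of fun i j =>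
        ![(Pi.single 2 1 : Fin 7 → K), Pi.single 3 1, Pi.single 6 1, w] i (σ j)) +
      Matrix.det (Matrix.of fun i j =>
        ![(Pi.single 4 1 : Fin 7 → K), Pi.single 5 1, Pi.single 6 1, w] i (σ j)) = 0 := by
    intro σ
    have := congrArg (Fdeg4 K σ) h1
    rwa [map_add, map_add, Fdeg4_apply, Fdeg4_apply, Fdeg4_apply, map_zero] at this
  have hw0 : w 0 = 0 := by
    have := hcoeff ![2, 3, 6, 0]
    simpa [Matrix.det_succ_row_zero, Fin.sum_univ_succ, Pi.single_apply] using this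
  have hw1 : w 1 = 0 := by
    have := hcoeff ![2, 3, 6, 1]
    simpa [Matrix.det_succ_row_zero, Fin.sum_univ_succ, Pi.single_apply] using this
  have hw2 : w 2 = 0 := by
    have := hcoeff ![0, 1, 6, 2]
    simpa [Matrix.det_succ_row_zero, Fin.sum_univ_succ, Pi.single_apply] using this
  have hw3 : w 3 = 0 := by
    have := hcoeff ![0, 1, 6, 3]
    simpa [Matrix.det_succ_row_zero, Fin.sum_univ_succ, Pi.single_apply] using this
  have hw4 : w 4 = 0 := by
    have := hcoeff ![0, 1, 6, 4]
    simpa [Matrix.det_succ_row_zero, Fin.sum_univ_succ, Pi.single_apply] using this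
  have hw5 : w 5 = 0 := by
    have := hcoeff ![0, 1, 6, 5]
    simpa [Matrix.det_succ_row_zero, Fin.sum_univ_succ, Pi.single_apply] using this
  -- Step 3: w is a multiple of e₆
  have hw : w = w 6 • (Pi.single 6 1 : Fin 7 → K) := by
    funext i
    fin_cases i <;> simp [hw0, hw1, hw2, hw3, hw4, hw5, Pi.single_apply]
  have hιw : ι K w = w 6 • e7 K 6 := by
    conv_lhs => rw [hw]
    rw [map_smul, e7]
  -- Step 5: γ := w 6 • η satisfies γ * e₆ = β * e₆
  set γ : ExteriorAlgebra K (Fin 7 → K) := w 6 • η with hγdef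
  have hγ : γ * e7 K 6 = β * e7 K 6 := by
    rw [hγdef, smul_mul_assoc, ← mul_smul_comm, ← hιw, ← h]
  -- η³ = 0, hence γ³ = 0
  have hη3 : η * (η * η) = 0 :=
    cube_zero _ _ (pair_sq u₁ u₂) (pair_sq u₃ u₄) (pair_comm u₁ u₂ u₃ u₄)
  have hγ3 : γ * (γ * γ) = 0 := by
    rw [hγdef]
    simp [smul_mul_assoc, mul_smul_comm, hη3]
  -- β and γ commute
  have hβη : β * η = η * β := by
    rw [hβdef, hηdef]
    simp only [e7, add_mul, mul_add, pair_comm (Pi.single 0 1) (Pi.single 1 1) u₁ u₂,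
      pair_comm (Pi.single 2 1) (Pi.single 3 1) u₁ u₂,
      pair_comm (Pi.single 4 1) (Pi.single 5 1) u₁ u₂,
      pair_comm (Pi.single 0 1) (Pi.single 1 1) u₃ u₄,
      pair_comm (Pi.single 2 1) (Pi.single 3 1) u₃ u₄,
      pair_comm (Pi.single 4 1) (Pi.single 5 1) u₃ u₄]
    abel
  have hβγ : β * γ = γ * β := by
    rw [hγdef, mul_smul_comm, smul_mul_assoc, hβη]
  -- Step 8: β³ e₆ = 0
  have hswap : ∀ x : ExteriorAlgebra K (Fin 7 → K), β * (γ * x) = γ * (β * x) := fun x => by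
    rw [← mul_assoc, hβγ, mul_assoc]
  have hβ3 : β * (β * (β * e7 K 6)) = 0 := by
    calc β * (β * (β * e7 K 6)) = β * (β * (γ * e7 K 6)) := by rw [hγ]
      _ = β * (γ * (β * e7 K 6)) := by rw [hswap]
      _ = β * (γ * (γ * e7 K 6)) := by rw [hγ]
      _ = γ * (β * (γ * e7 K 6)) := by rw [hswap]
      _ = γ * (γ * (β * e7 K 6)) := by rw [hswap]
      _ = γ * (γ * (γ * e7 K 6)) := by rw [hγ]
      _ = (γ * (γ * γ)) * e7 K 6 := by rw [mul_assoc, mul_assoc]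
      _ = 0 := by rw [hγ3, zero_mul]
  -- Step 9: but β³ e₆ = 6 • (e₀e₁e₂e₃e₄e₅e₆) ≠ 0
  have hβexp : β * (β * (β * e7 K 6)) =
      (e7 K 0 * e7 K 1) * ((e7 K 2 * e7 K 3) * ((e7 K 4 * e7 K 5) * e7 K 6)) +
      (e7 K 0 * e7 K 1) * ((e7 K 2 * e7 K 3) * ((e7 K 4 * e7 K 5) * e7 K 6)) +
      (e7 K 0 * e7 K 1) * ((e7 K 2 * e7 K 3) * ((e7 K 4 * e7 K 5) * e7 K 6)) +
      (e7 K 0 * e7 K 1) * ((e7 K 2 * e7 K 3) * ((e7 K 4 * e7 K 5) * e7 K 6)) +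
      (e7 K 0 * e7 K 1) * ((e7 K 2 * e7 K 3) * ((e7 K 4 * e7 K 5) * e7 K 6)) +
      (e7 K 0 * e7 K 1) * ((e7 K 2 * e7 K 3) * ((e7 K 4 * e7 K 5) * e7 K 6)) := by
    rw [hβdef]
    exact triple_cube _ _ _ _ (pair_sq _ _) (pair_sq _ _) (pair_sq _ _)
      (pair_comm _ _ _ _) (pair_comm _ _ _ _) (pair_comm _ _ _ _)
  rw [hβexp] at hβ3
  simp only [e7, mul_assoc] at hβ3
  have h6 := congrArg (Fdeg7 K (id : Fin 7 → Fin 7)) hβ3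
  rw [map_add, map_add, map_add, map_add, map_add, map_zero, Ftop] at h6
  norm_num at h6
end
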